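/- arXiv:1901.04046 — 11 statements merged into one kernel-verified Lean document; each statement's English description precedes it below -/
import Mathlib

section
/- For every α ∈ (0,1) and all real numbers a, b: φ(a,b) = 0 if and only if a ≥ 0, b ≥ 0, and a·b = 0 (i.e., the penalized Fischer–Burmeister function is an NCP function). -/
/-- The penalized Fischer–Burmeister function is an NCP function:
for every `α ∈ (0,1)` and all reals `a b`, `φ α a b = 0 ↔ a ≥ 0 ∧ b ≥ 0 ∧ a * b = 0`. -/
theorem pfb_is_ncp_function (α : ℝ) (hα : α ∈ Set.Ioo (0:ℝ) 1) (a b : ℝ) :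
    α * (a + b - Real.sqrt (a ^ 2 + b ^ 2)) + (1 - α) * max a 0 * max b 0 = 0 ↔
      0 ≤ a ∧ 0 ≤ b ∧ a * b = 0 := by
  obtain ⟨hα0, hα1⟩ := hα
  set s := Real.sqrt (a ^ 2 + b ^ 2) with hs
  have hs0 : 0 ≤ s := Real.sqrt_nonneg _
  have hs2 : s ^ 2 = a ^ 2 + b ^ 2 := Real.sq_sqrt (by positivity)
  have hsa : |a| ≤ s := by
    rw [← Real.sqrt_sq_eq_abs]; exact Real.sqrt_le_sqrt (by nlinarith)
  have hsb : |b| ≤ s := by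
    rw [← Real.sqrt_sq_eq_abs]; exact Real.sqrt_le_sqrt (by nlinarith)
  have hP : 0 ≤ max a 0 * max b 0 := mul_nonneg (le_max_right _ _) (le_max_right _ _)
  constructor
  · intro h
    rcases lt_trichotomy (a + b - s) 0 with hlt | heq | hgt
    · exfalso
      have hmax : max a 0 * max b 0 = 0 := by
        rcases le_or_gt a 0 with ha | ha
        · simp [max_eq_right ha]
        rcases le_or_gt b 0 with hb | hb
        · simp [max_eq_right hb]
        · exfalso
          have hab : 0 < a * b := mul_pos ha hb
          nlinarith
      have h0 : (1 - α) * max a 0 * max b 0 = 0 := by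
        rw [mul_assoc, hmax, mul_zero]
      nlinarith
    · have hab : a * b = 0 := by nlinarith
      have ha : 0 ≤ a := by
        have := le_abs_self b
        linarith
      have hb : 0 ≤ b := by
        have := le_abs_self a
        linarith
      exact ⟨ha, hb, hab⟩
    · exfalso
      nlinarith [mul_pos hα0 hgt]
  · rintro ⟨ha, hb, hab⟩
    have hseq : s = a + b := by
      rw [hs, show a ^ 2 + b ^ 2 = (a + b) ^ 2 by nlinarith, Real.sqrt_sq (by linarith)]
    rw [hseq, max_eq_left ha, max_eq_left hb]
    nlinarith
end

section
/- The function ψ : ℝ² → ℝ defined by ψ(a,b) = ½·φ(a,b)² is continuously differentiable on all of ℝ², even though φ itself is not differentiable at (0,0). -/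
open Real Filter Asymptotics ContinuousLinearMap

noncomputable section PFB

def pfbPhi (α : ℝ) (p : ℝ × ℝ) : ℝ :=
  α * (p.1 + p.2 - Real.sqrt (p.1 ^ 2 + p.2 ^ 2)) + (1 - α) * max p.1 0 * max p.2 0

def pfbL (α : ℝ) (p : ℝ × ℝ) : ℝ × ℝ →L[ℝ] ℝ :=
  α • ((1 - p.1 / Real.sqrt (p.1 ^ 2 + p.2 ^ 2)) • ContinuousLinearMap.fst ℝ ℝ ℝ
      + (1 - p.2 / Real.sqrt (p.1 ^ 2 + p.2 ^ 2)) • ContinuousLinearMap.snd ℝ ℝ ℝ)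
  + (1 - α) • ((if 0 < p.1 then max p.2 0 else 0) • ContinuousLinearMap.fst ℝ ℝ ℝ
      + (if 0 < p.2 then max p.1 0 else 0) • ContinuousLinearMap.snd ℝ ℝ ℝ)

def pfbD (α : ℝ) (p : ℝ × ℝ) : ℝ × ℝ →L[ℝ] ℝ := pfbPhi α p • pfbL α p

def pfbBad : Set (ℝ × ℝ) := {p | 0 ≤ p.1 ∧ 0 ≤ p.2 ∧ p.1 * p.2 = 0}

lemma pfbL_apply (α : ℝ) (p v : ℝ × ℝ) :
    pfbL α p v = α * ((1 - p.1 / Real.sqrt (p.1 ^ 2 + p.2 ^ 2)) * v.1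
      + (1 - p.2 / Real.sqrt (p.1 ^ 2 + p.2 ^ 2)) * v.2)
      + (1 - α) * ((if 0 < p.1 then max p.2 0 else 0) * v.1
      + (if 0 < p.2 then max p.1 0 else 0) * v.2) := by
  by_cases h1 : 0 < p.1 <;> by_cases h2 : 0 < p.2 <;>
    simp [pfbL, h1, h2, mul_add] <;> ring

lemma abs_le_sqrt_left (a b : ℝ) : |a| ≤ Real.sqrt (a ^ 2 + b ^ 2) := by
  rw [← Real.sqrt_sq_eq_abs]
  exact Real.sqrt_le_sqrt (by nlinarith [sq_nonneg b])

lemma abs_le_sqrt_right (a b : ℝ) : |b| ≤ Real.sqrt (a ^ 2 + b ^ 2) := by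
  rw [← Real.sqrt_sq_eq_abs]
  exact Real.sqrt_le_sqrt (by nlinarith [sq_nonneg a])

lemma sqrt_le_abs_add (a b : ℝ) : Real.sqrt (a ^ 2 + b ^ 2) ≤ |a| + |b| := by
  rw [show |a| + |b| = Real.sqrt ((|a| + |b|) ^ 2) from
    (Real.sqrt_sq (by positivity)).symm]
  apply Real.sqrt_le_sqrt
  have h1 : |a| ^ 2 = a ^ 2 := sq_abs a
  have h2 : |b| ^ 2 = b ^ 2 := sq_abs b
  nlinarith [mul_nonneg (abs_nonneg a) (abs_nonneg b)]

lemma sqrt_triangle (a b c d : ℝ) :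
    Real.sqrt (a ^ 2 + b ^ 2) ≤ Real.sqrt ((a - c) ^ 2 + (b - d) ^ 2)
      + Real.sqrt (c ^ 2 + d ^ 2) := by
  set u := Real.sqrt ((a - c) ^ 2 + (b - d) ^ 2) with hu
  set v := Real.sqrt (c ^ 2 + d ^ 2) with hv
  have hu0 : 0 ≤ u := Real.sqrt_nonneg _
  have hv0 : 0 ≤ v := Real.sqrt_nonneg _
  have hu2 : u ^ 2 = (a - c) ^ 2 + (b - d) ^ 2 := Real.sq_sqrt (by positivity)
  have hv2 : v ^ 2 = c ^ 2 + d ^ 2 := Real.sq_sqrt (by positivity)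
  rw [show u + v = Real.sqrt ((u + v) ^ 2) from (Real.sqrt_sq (by positivity)).symm]
  apply Real.sqrt_le_sqrt
  have key : (c * (a - c) + d * (b - d)) ≤ u * v := by
    have h1 : (c * (a - c) + d * (b - d)) ^ 2 ≤ (u * v) ^ 2 := by
      have := sq_nonneg (c * (b - d) - d * (a - c))
      nlinarith
    have h2 : 0 ≤ u * v := mul_nonneg hu0 hv0
    nlinarith [le_abs_self (c * (a - c) + d * (b - d)),
      sq_abs (c * (a - c) + d * (b - d)), abs_nonneg (c * (a - c) + d * (b - d))]
  nlinarith

lemma abs_div_sqrt_le_one (a b : ℝ) : |a / Real.sqrt (a ^ 2 + b ^ 2)| ≤ 1 := by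
  rcases eq_or_lt_of_le (Real.sqrt_nonneg (a ^ 2 + b ^ 2)) with h | h
  · simp [← h]
  · rw [abs_div, abs_of_pos h, div_le_one h]
    exact abs_le_sqrt_left a b

lemma abs_div_sqrt_le_one' (a b : ℝ) : |b / Real.sqrt (a ^ 2 + b ^ 2)| ≤ 1 := by
  rw [add_comm]; exact abs_div_sqrt_le_one b a

lemma abs_max_le (a : ℝ) : |max a 0| ≤ |a| := by
  rw [abs_of_nonneg (le_max_right a 0)]
  exact max_le (le_abs_self a) (abs_nonneg a)

lemma phi_zero_on_bad (α : ℝ) {p : ℝ × ℝ} (hp : p ∈ pfbBad) : pfbPhi α p = 0 := by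
  obtain ⟨h1, h2, h3⟩ := hp
  rcases mul_eq_zero.1 h3 with h | h
  · simp [pfbPhi, h, Real.sqrt_sq_eq_abs, abs_of_nonneg h2]
  · simp [pfbPhi, h, Real.sqrt_sq_eq_abs, abs_of_nonneg h1]

lemma not_bad_cases {p : ℝ × ℝ} (hp : p ∉ pfbBad) :
    p.1 < 0 ∨ p.2 < 0 ∨ (0 < p.1 ∧ 0 < p.2) := by
  simp only [pfbBad, Set.mem_setOf_eq, not_and_or, not_le] at hp
  rcases hp with h | h | h
  · exact Or.inl h
  · exact Or.inr (Or.inl h)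
  · rcases lt_trichotomy p.1 0 with h1 | h1 | h1
    · exact Or.inl h1
    · exact absurd (by simp [h1]) h
    · rcases lt_trichotomy p.2 0 with h2 | h2 | h2
      · exact Or.inr (Or.inl h2)
      · exact absurd (by simp [h2]) h
      · exact Or.inr (Or.inr ⟨h1, h2⟩)

lemma not_bad_sq_ne {p : ℝ × ℝ} (hp : p ∉ pfbBad) : p.1 ^ 2 + p.2 ^ 2 ≠ 0 := by
  have : 0 < p.1 ^ 2 + p.2 ^ 2 := by
    rcases not_bad_cases hp with h | h | ⟨h, _⟩ <;> nlinarith [sq_nonneg p.1, sq_nonneg p.2]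
  exact this.ne'

lemma two_term_bound {α a1 a2 b1 b2 v1 v2 nv P1 P2 : ℝ} (hα0 : 0 ≤ α) (hα1 : α ≤ 1)
    (h1 : |a1| ≤ 2) (h2 : |a2| ≤ 2) (h3 : |b1| ≤ P2) (h4 : |b2| ≤ P1)
    (hv1 : |v1| ≤ nv) (hv2 : |v2| ≤ nv) (hnv : 0 ≤ nv) (hP1 : 0 ≤ P1) (hP2 : 0 ≤ P2) :
    |α * (a1 * v1 + a2 * v2) + (1 - α) * (b1 * v1 + b2 * v2)| ≤ (4 + P1 + P2) * nv := by
  have k1 : |a1 * v1 + a2 * v2| ≤ 4 * nv := by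
    calc |a1 * v1 + a2 * v2| ≤ |a1| * |v1| + |a2| * |v2| := by
          rw [← abs_mul, ← abs_mul]; exact abs_add_le _ _
      _ ≤ 2 * nv + 2 * nv := add_le_add
          (mul_le_mul h1 hv1 (abs_nonneg _) (by norm_num))
          (mul_le_mul h2 hv2 (abs_nonneg _) (by norm_num))
      _ = 4 * nv := by ring
  have k2 : |b1 * v1 + b2 * v2| ≤ (P1 + P2) * nv := by
    calc |b1 * v1 + b2 * v2| ≤ |b1| * |v1| + |b2| * |v2| := by
          rw [← abs_mul, ← abs_mul]; exact abs_add_le _ _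
      _ ≤ P2 * nv + P1 * nv := add_le_add
          (mul_le_mul h3 hv1 (abs_nonneg _) hP2)
          (mul_le_mul h4 hv2 (abs_nonneg _) hP1)
      _ = (P1 + P2) * nv := by ring
  have k3 := abs_add_le (α * (a1 * v1 + a2 * v2)) ((1 - α) * (b1 * v1 + b2 * v2))
  rw [abs_mul, abs_mul, abs_of_nonneg hα0, abs_of_nonneg (by linarith : (0:ℝ) ≤ 1 - α)] at k3
  nlinarith [mul_le_mul_of_nonneg_left k1 hα0,
    mul_le_mul_of_nonneg_left k2 (by linarith : (0:ℝ) ≤ 1 - α),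
    mul_nonneg (by linarith : (0:ℝ) ≤ 1 - α) (mul_nonneg (by norm_num : (0:ℝ) ≤ 4) hnv),
    mul_nonneg hα0 (mul_nonneg (by linarith : (0:ℝ) ≤ P1 + P2) hnv)]

lemma pfbL_norm_le {α : ℝ} (hα : α ∈ Set.Ioo (0:ℝ) 1) (p : ℝ × ℝ) :
    ‖pfbL α p‖ ≤ 4 + |p.1| + |p.2| := by
  apply ContinuousLinearMap.opNorm_le_bound _ (by positivity)
  intro v
  rw [pfbL_apply, Real.norm_eq_abs]
  have hv1 : |v.1| ≤ ‖v‖ := by simpa using norm_fst_le v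
  have hv2 : |v.2| ≤ ‖v‖ := by simpa using norm_snd_le v
  have hd1 : |1 - p.1 / Real.sqrt (p.1 ^ 2 + p.2 ^ 2)| ≤ 2 := by
    have := abs_div_sqrt_le_one p.1 p.2
    have := abs_sub (1:ℝ) (p.1 / Real.sqrt (p.1 ^ 2 + p.2 ^ 2))
    calc |1 - p.1 / Real.sqrt (p.1 ^ 2 + p.2 ^ 2)|
        ≤ |(1:ℝ)| + |p.1 / Real.sqrt (p.1 ^ 2 + p.2 ^ 2)| := abs_sub _ _
      _ ≤ 1 + 1 := by simp; exact abs_div_sqrt_le_one p.1 p.2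
      _ = 2 := by norm_num
  have hd2 : |1 - p.2 / Real.sqrt (p.1 ^ 2 + p.2 ^ 2)| ≤ 2 := by
    calc |1 - p.2 / Real.sqrt (p.1 ^ 2 + p.2 ^ 2)|
        ≤ |(1:ℝ)| + |p.2 / Real.sqrt (p.1 ^ 2 + p.2 ^ 2)| := abs_sub _ _
      _ ≤ 1 + 1 := by simp; exact abs_div_sqrt_le_one' p.1 p.2
      _ = 2 := by norm_num
  have he1 : |(if 0 < p.1 then max p.2 0 else 0)| ≤ |p.2| := by
    split
    · exact abs_max_le p.2
    · simp
  have he2 : |(if 0 < p.2 then max p.1 0 else 0)| ≤ |p.1| := by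
    split
    · exact abs_max_le p.1
    · simp
  exact two_term_bound hα.1.le hα.2.le hd1 hd2 he1 he2 hv1 hv2 (norm_nonneg v)
    (abs_nonneg p.1) (abs_nonneg p.2)

end PFB

section PFB2
open scoped Topology

lemma phi_diff_bound {α : ℝ} (hα : α ∈ Set.Ioo (0:ℝ) 1) (p q : ℝ × ℝ) :
    |pfbPhi α q - pfbPhi α p| ≤ (4 + |q.1| + |p.2|) * ‖q - p‖ := by
  have hv1 : |q.1 - p.1| ≤ ‖q - p‖ := by
    have := norm_fst_le (q - p); simpa using this
  have hv2 : |q.2 - p.2| ≤ ‖q - p‖ := by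
    have := norm_snd_le (q - p); simpa using this
  have hD : Real.sqrt ((q.1 - p.1) ^ 2 + (q.2 - p.2) ^ 2) ≤ |q.1 - p.1| + |q.2 - p.2| :=
    sqrt_le_abs_add _ _
  have hsq : |Real.sqrt (q.1 ^ 2 + q.2 ^ 2) - Real.sqrt (p.1 ^ 2 + p.2 ^ 2)|
      ≤ |q.1 - p.1| + |q.2 - p.2| := by
    have t1 := sqrt_triangle q.1 q.2 p.1 p.2
    have t2 := sqrt_triangle p.1 p.2 q.1 q.2
    have e : (p.1 - q.1) ^ 2 + (p.2 - q.2) ^ 2 = (q.1 - p.1) ^ 2 + (q.2 - p.2) ^ 2 := by ring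
    rw [e] at t2
    rw [abs_sub_le_iff]
    constructor <;> linarith
  have hmax1 : |max q.1 0 - max p.1 0| ≤ |q.1 - p.1| := abs_max_sub_max_le_abs _ _ _
  have hmax2 : |max q.2 0 - max p.2 0| ≤ |q.2 - p.2| := abs_max_sub_max_le_abs _ _ _
  have hmq1 : |max q.1 0| ≤ |q.1| := abs_max_le q.1
  have hmp2 : |max p.2 0| ≤ |p.2| := abs_max_le p.2
  have hsplit : pfbPhi α q - pfbPhi α p =
      α * ((q.1 - p.1) + (q.2 - p.2)
        - (Real.sqrt (q.1 ^ 2 + q.2 ^ 2) - Real.sqrt (p.1 ^ 2 + p.2 ^ 2)))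
      + (1 - α) * (max q.1 0 * (max q.2 0 - max p.2 0)
        + max p.2 0 * (max q.1 0 - max p.1 0)) := by
    unfold pfbPhi; ring
  rw [hsplit]
  have hX : |(q.1 - p.1) + (q.2 - p.2)
      - (Real.sqrt (q.1 ^ 2 + q.2 ^ 2) - Real.sqrt (p.1 ^ 2 + p.2 ^ 2))| ≤ 4 * ‖q - p‖ := by
    have h1 := abs_add_le (q.1 - p.1) (q.2 - p.2)
    have h2 := abs_sub ((q.1 - p.1) + (q.2 - p.2))
      (Real.sqrt (q.1 ^ 2 + q.2 ^ 2) - Real.sqrt (p.1 ^ 2 + p.2 ^ 2))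
    linarith
  have hY : |max q.1 0 * (max q.2 0 - max p.2 0) + max p.2 0 * (max q.1 0 - max p.1 0)|
      ≤ (|q.1| + |p.2|) * ‖q - p‖ := by
    calc |max q.1 0 * (max q.2 0 - max p.2 0) + max p.2 0 * (max q.1 0 - max p.1 0)|
        ≤ |max q.1 0| * |max q.2 0 - max p.2 0| + |max p.2 0| * |max q.1 0 - max p.1 0| := by
          rw [← abs_mul, ← abs_mul]; exact abs_add_le _ _
      _ ≤ |q.1| * ‖q - p‖ + |p.2| * ‖q - p‖ := add_le_add
          (mul_le_mul hmq1 (le_trans hmax2 hv2) (abs_nonneg _) (abs_nonneg _))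
          (mul_le_mul hmp2 (le_trans hmax1 hv1) (abs_nonneg _) (abs_nonneg _))
      _ = (|q.1| + |p.2|) * ‖q - p‖ := by ring
  have k3 := abs_add_le (α * ((q.1 - p.1) + (q.2 - p.2)
      - (Real.sqrt (q.1 ^ 2 + q.2 ^ 2) - Real.sqrt (p.1 ^ 2 + p.2 ^ 2))))
    ((1 - α) * (max q.1 0 * (max q.2 0 - max p.2 0) + max p.2 0 * (max q.1 0 - max p.1 0)))
  rw [abs_mul, abs_mul, abs_of_nonneg hα.1.le,
    abs_of_nonneg (by linarith [hα.2] : (0:ℝ) ≤ 1 - α)] at k3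
  nlinarith [mul_le_mul_of_nonneg_left hX hα.1.le,
    mul_le_mul_of_nonneg_left hY (by linarith [hα.2] : (0:ℝ) ≤ 1 - α),
    mul_nonneg (by linarith [hα.2] : (0:ℝ) ≤ 1 - α)
      (mul_nonneg (by norm_num : (0:ℝ) ≤ 4) (norm_nonneg (q - p))),
    mul_nonneg hα.1.le (mul_nonneg
      (by positivity : (0:ℝ) ≤ |q.1| + |p.2|) (norm_nonneg (q - p)))]

end PFB2

section PFB3
open scoped Topology

lemma hasFDerivAt_phi {α : ℝ} {p : ℝ × ℝ} (hp : p ∉ pfbBad) :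
    HasFDerivAt (pfbPhi α) (pfbL α p) p := by
  have hs : p.1 ^ 2 + p.2 ^ 2 ≠ 0 := not_bad_sq_ne hp
  have hr : Real.sqrt (p.1 ^ 2 + p.2 ^ 2) ≠ 0 := by
    simpa [Real.sqrt_eq_zero'] using lt_of_le_of_ne (by positivity) (Ne.symm hs)
  -- derivative of the inner square sum
  have h2 : HasFDerivAt (fun q : ℝ × ℝ => q.1 ^ 2 + q.2 ^ 2)
      ((2 * p.1) • ContinuousLinearMap.fst ℝ ℝ ℝ
        + (2 * p.2) • ContinuousLinearMap.snd ℝ ℝ ℝ) p := by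
    have ha := ((hasFDerivAt_fst (𝕜 := ℝ) (p := p)).mul (hasFDerivAt_fst (𝕜 := ℝ) (p := p))).add
      ((hasFDerivAt_snd (𝕜 := ℝ) (p := p)).mul (hasFDerivAt_snd (𝕜 := ℝ) (p := p)))
    have hfun : (fun q : ℝ × ℝ => q.1 ^ 2 + q.2 ^ 2) = fun q => q.1 * q.1 + q.2 * q.2 := by
      funext q; ring
    rw [hfun]
    refine ha.congr_fderiv (Eq.symm ?_)
    refine ContinuousLinearMap.ext fun v => ?_
    simp
    ring
  have h3 := h2.sqrt hs
  have hf : HasFDerivAt (fun q : ℝ × ℝ => α * (q.1 + q.2 - Real.sqrt (q.1 ^ 2 + q.2 ^ 2)))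
      (α • ((ContinuousLinearMap.fst ℝ ℝ ℝ + ContinuousLinearMap.snd ℝ ℝ ℝ)
        - (1 / (2 * Real.sqrt (p.1 ^ 2 + p.2 ^ 2)))
          • ((2 * p.1) • ContinuousLinearMap.fst ℝ ℝ ℝ
            + (2 * p.2) • ContinuousLinearMap.snd ℝ ℝ ℝ))) p :=
    (((hasFDerivAt_fst (𝕜 := ℝ) (p := p)).add (hasFDerivAt_snd (𝕜 := ℝ) (p := p))).sub h3).const_mul α
  have hphi : pfbPhi α = fun q : ℝ × ℝ =>
      α * (q.1 + q.2 - Real.sqrt (q.1 ^ 2 + q.2 ^ 2)) + (1 - α) * max q.1 0 * max q.2 0 := rfl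
  rcases not_bad_cases hp with hc | hc | hc
  · -- p.1 < 0 : quadratic term locally zero
    have hmem : {q : ℝ × ℝ | q.1 < 0} ∈ 𝓝 p :=
      (isOpen_lt continuous_fst continuous_const).mem_nhds hc
    have hq0 : (fun q : ℝ × ℝ => (1 - α) * max q.1 0 * max q.2 0) =ᶠ[𝓝 p] fun _ => (0:ℝ) := by
      filter_upwards [hmem] with q hq
      simp [max_eq_right (le_of_lt hq)]
    have hq : HasFDerivAt (fun q : ℝ × ℝ => (1 - α) * max q.1 0 * max q.2 0)
        (0 : ℝ × ℝ →L[ℝ] ℝ) p :=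
      (hasFDerivAt_const (0:ℝ) p).congr_of_eventuallyEq hq0
    rw [hphi]
    refine (hf.add hq).congr_fderiv (Eq.symm ?_)
    refine ContinuousLinearMap.ext fun v => ?_
    rw [pfbL_apply]
    have : ¬ (0 < p.1) := by linarith
    simp [this, max_eq_right hc.le]
    field_simp
    try ring
    try exact Or.inl trivial
  · -- p.2 < 0
    have hmem : {q : ℝ × ℝ | q.2 < 0} ∈ 𝓝 p :=
      (isOpen_lt continuous_snd continuous_const).mem_nhds hc
    have hq0 : (fun q : ℝ × ℝ => (1 - α) * max q.1 0 * max q.2 0) =ᶠ[𝓝 p] fun _ => (0:ℝ) := by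
      filter_upwards [hmem] with q hq
      simp [max_eq_right (le_of_lt hq)]
    have hq : HasFDerivAt (fun q : ℝ × ℝ => (1 - α) * max q.1 0 * max q.2 0)
        (0 : ℝ × ℝ →L[ℝ] ℝ) p :=
      (hasFDerivAt_const (0:ℝ) p).congr_of_eventuallyEq hq0
    rw [hphi]
    refine (hf.add hq).congr_fderiv (Eq.symm ?_)
    refine ContinuousLinearMap.ext fun v => ?_
    rw [pfbL_apply]
    have : ¬ (0 < p.2) := by linarith
    simp [this, max_eq_right hc.le]
    field_simp
    try ring
    try exact Or.inl trivial
  · -- 0 < p.1 and 0 < p.2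
    obtain ⟨hc1, hc2⟩ := hc
    have hmem : {q : ℝ × ℝ | 0 < q.1 ∧ 0 < q.2} ∈ 𝓝 p :=
      ((isOpen_lt continuous_const continuous_fst).inter
        (isOpen_lt continuous_const continuous_snd)).mem_nhds ⟨hc1, hc2⟩
    have hq0 : (fun q : ℝ × ℝ => (1 - α) * max q.1 0 * max q.2 0)
        =ᶠ[𝓝 p] fun q => (1 - α) * q.1 * q.2 := by
      filter_upwards [hmem] with q hq
      rw [max_eq_left hq.1.le, max_eq_left hq.2.le]
    have hmul : HasFDerivAt (fun q : ℝ × ℝ => (1 - α) * q.1 * q.2)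
        (((1 - α) * p.1) • ContinuousLinearMap.snd ℝ ℝ ℝ
          + p.2 • ((1 - α) • ContinuousLinearMap.fst ℝ ℝ ℝ)) p :=
      ((hasFDerivAt_fst (𝕜 := ℝ) (p := p)).const_mul (1 - α)).mul (hasFDerivAt_snd (𝕜 := ℝ) (p := p))
    have hq := hmul.congr_of_eventuallyEq hq0
    rw [hphi]
    refine (hf.add hq).congr_fderiv (Eq.symm ?_)
    refine ContinuousLinearMap.ext fun v => ?_
    rw [pfbL_apply]
    simp [hc1, hc2, max_eq_left hc1.le, max_eq_left hc2.le]
    field_simp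
    try ring
    try exact Or.inl trivial

end PFB3

section PFB4
open scoped Topology

lemma hasFDerivAt_psi {α : ℝ} (hα : α ∈ Set.Ioo (0:ℝ) 1) (p : ℝ × ℝ) :
    HasFDerivAt (fun q : ℝ × ℝ => (1 / 2) * pfbPhi α q ^ 2) (pfbD α p) p := by
  by_cases hp : p ∈ pfbBad
  · -- zero derivative at bad points
    have hφp : pfbPhi α p = 0 := phi_zero_on_bad α hp
    have hD0 : pfbD α p = 0 := by simp [pfbD, hφp]
    rw [hD0, hasFDerivAt_iff_isLittleO_nhds_zero, isLittleO_iff]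
    intro ε hε
    set C : ℝ := 5 + |p.1| + |p.2| with hC
    have hC0 : 0 < C := by positivity
    clear_value C
    have hδ : 0 < min 1 (2 * ε / C ^ 2) := by positivity
    filter_upwards [Metric.ball_mem_nhds (0 : ℝ × ℝ) hδ] with h hh
    rw [mem_ball_zero_iff] at hh
    have hh1 : ‖h‖ ≤ 1 := le_of_lt (lt_of_lt_of_le hh (min_le_left _ _))
    have hh2 : ‖h‖ ≤ 2 * ε / C ^ 2 := le_of_lt (lt_of_lt_of_le hh (min_le_right _ _))
    have hbd := phi_diff_bound hα p (p + h)
    have hsub : p + h - p = h := by abel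
    rw [hsub, hφp, sub_zero] at hbd
    have hfst : |(p + h).1| ≤ |p.1| + 1 := by
      have : |(p + h).1| ≤ |p.1| + |h.1| := by
        simpa using abs_add_le p.1 h.1
      have h1 : |h.1| ≤ ‖h‖ := by simpa using norm_fst_le h
      linarith
    have hφ : |pfbPhi α (p + h)| ≤ C * ‖h‖ := by
      refine le_trans hbd ?_
      apply mul_le_mul_of_nonneg_right _ (norm_nonneg h)
      simp only [hC]
      linarith
    clear hC
    have key : |pfbPhi α (p + h)| ^ 2 ≤ C ^ 2 * ‖h‖ ^ 2 := by
      have := mul_le_mul hφ hφ (abs_nonneg _) (by positivity)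
      nlinarith
    rw [Real.norm_eq_abs]
    have hval : (1:ℝ) / 2 * pfbPhi α (p + h) ^ 2 - 1 / 2 * pfbPhi α p ^ 2
        - (0 : ℝ × ℝ →L[ℝ] ℝ) h = 1 / 2 * pfbPhi α (p + h) ^ 2 := by
      simp [hφp]
    rw [hval]
    have h1 : |1 / 2 * pfbPhi α (p + h) ^ 2| = 1 / 2 * pfbPhi α (p + h) ^ 2 := by
      rw [abs_of_nonneg]; positivity
    rw [h1]
    have hq2 : C ^ 2 * (2 * ε / C ^ 2) = 2 * ε := by field_simp
    have h3 : ‖h‖ * ‖h‖ ≤ (2 * ε / C ^ 2) * ‖h‖ :=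
      mul_le_mul_of_nonneg_right hh2 (norm_nonneg h)
    have h4 : C ^ 2 * (‖h‖ * ‖h‖) ≤ C ^ 2 * ((2 * ε / C ^ 2) * ‖h‖) :=
      mul_le_mul_of_nonneg_left h3 (by positivity)
    calc 1 / 2 * pfbPhi α (p + h) ^ 2 = 1 / 2 * |pfbPhi α (p + h)| ^ 2 := by
          rw [sq_abs]
      _ ≤ 1 / 2 * (C ^ 2 * ‖h‖ ^ 2) := by linarith [key]
      _ = 1 / 2 * (C ^ 2 * (‖h‖ * ‖h‖)) := by ring
      _ ≤ 1 / 2 * (C ^ 2 * (2 * ε / C ^ 2 * ‖h‖)) := by linarith [h4]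
      _ = 1 / 2 * (C ^ 2 * (2 * ε / C ^ 2) * ‖h‖) := by ring
      _ = ε * ‖h‖ := by rw [hq2]; ring
  · have hphi := hasFDerivAt_phi (α := α) hp
    have hm := (hphi.mul hphi).const_mul (1 / 2 : ℝ)
    have hfun : (fun q : ℝ × ℝ => (1 / 2) * pfbPhi α q ^ 2)
        = fun q => (1 / 2 : ℝ) * (pfbPhi α q * pfbPhi α q) := by
      funext q; ring
    rw [hfun]
    refine hm.congr_fderiv (Eq.symm ?_)
    refine ContinuousLinearMap.ext fun v => ?_
    simp [pfbD]
    ring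

end PFB4

section PFB5
open scoped Topology

lemma continuous_phi (α : ℝ) : Continuous (pfbPhi α) := by
  unfold pfbPhi
  have hs : Continuous fun q : ℝ × ℝ => Real.sqrt (q.1 ^ 2 + q.2 ^ 2) :=
    Real.continuous_sqrt.comp ((continuous_fst.pow 2).add (continuous_snd.pow 2))
  exact (continuous_const.mul ((continuous_fst.add continuous_snd).sub hs)).add
    ((continuous_const.mul (continuous_fst.max continuous_const)).mul
      (continuous_snd.max continuous_const))

lemma continuous_pfbD {α : ℝ} (hα : α ∈ Set.Ioo (0:ℝ) 1) : Continuous (pfbD α) := by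
  rw [continuous_iff_continuousAt]
  intro p
  by_cases hp : p ∈ pfbBad
  · -- squeeze to 0
    have hD0 : pfbD α p = 0 := by simp [pfbD, phi_zero_on_bad α hp]
    rw [ContinuousAt, hD0]
    apply squeeze_zero_norm (a := fun q => |pfbPhi α q| * (4 + |q.1| + |q.2|))
    · intro q
      rw [pfbD]
      refine le_trans (norm_smul_le (pfbPhi α q) (pfbL α q)) ?_
      rw [Real.norm_eq_abs]
      exact mul_le_mul_of_nonneg_left (pfbL_norm_le hα q) (abs_nonneg _)
    · have hcont : Continuous fun q : ℝ × ℝ => |pfbPhi α q| * (4 + |q.1| + |q.2|) :=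
        (continuous_phi α).abs.mul
          ((continuous_const.add continuous_fst.abs).add continuous_snd.abs)
      have := hcont.tendsto p
      rw [show |pfbPhi α p| * (4 + |p.1| + |p.2|) = 0 by
        simp [phi_zero_on_bad α hp]] at this
      exact this
  · -- continuous formula at good points
    have hs : p.1 ^ 2 + p.2 ^ 2 ≠ 0 := not_bad_sq_ne hp
    have hrne : Real.sqrt (p.1 ^ 2 + p.2 ^ 2) ≠ 0 := by
      simpa [Real.sqrt_eq_zero'] using lt_of_le_of_ne (by positivity) (Ne.symm hs)
    have hsc : Continuous fun q : ℝ × ℝ => Real.sqrt (q.1 ^ 2 + q.2 ^ 2) :=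
      Real.continuous_sqrt.comp ((continuous_fst.pow 2).add (continuous_snd.pow 2))
    have hc1 : ContinuousAt (fun q : ℝ × ℝ => 1 - q.1 / Real.sqrt (q.1 ^ 2 + q.2 ^ 2)) p :=
      continuousAt_const.sub (continuous_fst.continuousAt.div hsc.continuousAt hrne)
    have hc2 : ContinuousAt (fun q : ℝ × ℝ => 1 - q.2 / Real.sqrt (q.1 ^ 2 + q.2 ^ 2)) p :=
      continuousAt_const.sub (continuous_snd.continuousAt.div hsc.continuousAt hrne)
    have hc3 : ContinuousAt (fun q : ℝ × ℝ => if 0 < q.1 then max q.2 0 else 0) p := by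
      rcases lt_trichotomy p.1 0 with h | h | h
      · have hmem : {q : ℝ × ℝ | q.1 < 0} ∈ 𝓝 p :=
          (isOpen_lt continuous_fst continuous_const).mem_nhds h
        refine (continuousAt_const (y := (0:ℝ))).congr ?_
        filter_upwards [hmem] with q hq
        simp [not_lt.2 hq.le, hq.not_gt]
      · -- p.1 = 0, hence p.2 < 0 since p is good
        have h2 : p.2 < 0 := by
          rcases not_bad_cases hp with hh | hh | hh
          · exact absurd h (by linarith [hh])
          · exact hh
          · exact absurd h (by linarith [hh.1])
        have hmem : {q : ℝ × ℝ | q.2 < 0} ∈ 𝓝 p :=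
          (isOpen_lt continuous_snd continuous_const).mem_nhds h2
        refine (continuousAt_const (y := (0:ℝ))).congr ?_
        filter_upwards [hmem] with q hq
        simp [max_eq_right hq.le]
      · have hmem : {q : ℝ × ℝ | 0 < q.1} ∈ 𝓝 p :=
          (isOpen_lt continuous_const continuous_fst).mem_nhds h
        refine (ContinuousAt.congr (f := fun q : ℝ × ℝ => max q.2 0)
          ((continuous_snd.max continuous_const).continuousAt) ?_)
        filter_upwards [hmem] with q hq
        simp [hq]
    have hc4 : ContinuousAt (fun q : ℝ × ℝ => if 0 < q.2 then max q.1 0 else 0) p := by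
      rcases lt_trichotomy p.2 0 with h | h | h
      · have hmem : {q : ℝ × ℝ | q.2 < 0} ∈ 𝓝 p :=
          (isOpen_lt continuous_snd continuous_const).mem_nhds h
        refine (continuousAt_const (y := (0:ℝ))).congr ?_
        filter_upwards [hmem] with q hq
        simp [not_lt.2 hq.le, hq.not_gt]
      · have h1 : p.1 < 0 := by
          rcases not_bad_cases hp with hh | hh | hh
          · exact hh
          · exact absurd h (by linarith [hh])
          · exact absurd h (by linarith [hh.2])
        have hmem : {q : ℝ × ℝ | q.1 < 0} ∈ 𝓝 p :=
          (isOpen_lt continuous_fst continuous_const).mem_nhds h1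
        refine (continuousAt_const (y := (0:ℝ))).congr ?_
        filter_upwards [hmem] with q hq
        simp [max_eq_right hq.le]
      · have hmem : {q : ℝ × ℝ | 0 < q.2} ∈ 𝓝 p :=
          (isOpen_lt continuous_const continuous_snd).mem_nhds h
        refine (ContinuousAt.congr (f := fun q : ℝ × ℝ => max q.1 0)
          ((continuous_fst.max continuous_const).continuousAt) ?_)
        filter_upwards [hmem] with q hq
        simp [hq]
    have hL : ContinuousAt (pfbL α) p := by
      show ContinuousAt (fun q : ℝ × ℝ =>
        α • ((1 - q.1 / Real.sqrt (q.1 ^ 2 + q.2 ^ 2)) • ContinuousLinearMap.fst ℝ ℝ ℝ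
          + (1 - q.2 / Real.sqrt (q.1 ^ 2 + q.2 ^ 2)) • ContinuousLinearMap.snd ℝ ℝ ℝ)
        + (1 - α) • ((if 0 < q.1 then max q.2 0 else 0) • ContinuousLinearMap.fst ℝ ℝ ℝ
          + (if 0 < q.2 then max q.1 0 else 0) • ContinuousLinearMap.snd ℝ ℝ ℝ)) p
      exact ((continuousAt_const (y := α)).smul
          ((hc1.smul (continuousAt_const (y := ContinuousLinearMap.fst ℝ ℝ ℝ))).add
            (hc2.smul (continuousAt_const (y := ContinuousLinearMap.snd ℝ ℝ ℝ))))).add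
        ((continuousAt_const (y := 1 - α)).smul
          ((hc3.smul (continuousAt_const (y := ContinuousLinearMap.fst ℝ ℝ ℝ))).add
            (hc4.smul (continuousAt_const (y := ContinuousLinearMap.snd ℝ ℝ ℝ)))))
    exact ((continuous_phi α).continuousAt).smul hL

end PFB5

/-- For `α ∈ (0,1)`, the squared penalized Fischer–Burmeister merit function
`ψ(a,b) = ½ φ(a,b)²` is continuously differentiable on all of `ℝ²`, even though
`φ` itself is not differentiable at `(0,0)`. -/
theorem pfb_squared_contDiff (α : ℝ) (hα : α ∈ Set.Ioo (0:ℝ) 1) :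
    ContDiff ℝ 1 (fun p : ℝ × ℝ =>
      (1 / 2) * (α * (p.1 + p.2 - Real.sqrt (p.1 ^ 2 + p.2 ^ 2)) +
        (1 - α) * max p.1 0 * max p.2 0) ^ 2) ∧
    ¬ DifferentiableAt ℝ (fun p : ℝ × ℝ =>
      α * (p.1 + p.2 - Real.sqrt (p.1 ^ 2 + p.2 ^ 2)) +
        (1 - α) * max p.1 0 * max p.2 0) (0, 0) := by
  constructor
  · show ContDiff ℝ 1 (fun p : ℝ × ℝ => (1 / 2) * pfbPhi α p ^ 2)
    rw [contDiff_one_iff_fderiv]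
    refine ⟨fun p => (hasFDerivAt_psi hα p).differentiableAt, ?_⟩
    have hfd : (fderiv ℝ fun p : ℝ × ℝ => (1 / 2) * pfbPhi α p ^ 2) = pfbD α :=
      funext fun p => (hasFDerivAt_psi hα p).fderiv
    rw [hfd]
    exact continuous_pfbD hα
  · intro hdiff
    have hdiff' : DifferentiableAt ℝ (pfbPhi α) ((0:ℝ), (0:ℝ)) := hdiff
    have hg : DifferentiableAt ℝ (fun t : ℝ => ((t, 0) : ℝ × ℝ)) 0 :=
      differentiableAt_id.prodMk (differentiableAt_const 0)
    have hcomp : DifferentiableAt ℝ (fun t : ℝ => pfbPhi α (t, 0)) 0 := by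
      have := DifferentiableAt.comp (g := pfbPhi α) (f := fun t : ℝ => ((t, 0) : ℝ × ℝ))
        0 hdiff' hg
      exact this
    have heq : (fun t : ℝ => pfbPhi α ((t : ℝ), (0:ℝ))) = fun t : ℝ => α * (t - |t|) := by
      funext t
      simp [pfbPhi, Real.sqrt_sq_eq_abs]
    rw [heq] at hcomp
    have habs : DifferentiableAt ℝ (fun t : ℝ => |t|) 0 := by
      have h2 : DifferentiableAt ℝ (fun t : ℝ => t - (α * (t - |t|)) / α) 0 :=
        differentiableAt_id.sub (hcomp.div_const α)
      have he : (fun t : ℝ => t - (α * (t - |t|)) / α) = fun t : ℝ => |t| := by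
        funext t
        rw [mul_div_cancel_left₀ _ (ne_of_gt hα.1)]
        ring
      rwa [he] at h2
    exact not_differentiableAt_abs_zero habs
end

section
/- For any fixed σ > 0 and x̄ = (z̄, λ̄, v̄) ∈ ℝⁿ × ℝᵐ × ℝ^q, define R : ℝⁿ × ℝᵐ × ℝ^q → ℝ^{n+m+q} by R(z,λ,v) = (Hz + f + Gᵀλ + Aᵀv + σ(z − z̄), h − Gz + σ(λ − λ̄), (φ(y_j, v_j))_{j=1,…,q}) where y = b − Az + σ(v − v̄). Then the merit function θ(x) = ½‖R(x)‖₂² is continuously differentiable on ℝⁿ × ℝᵐ × ℝ^q. -/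
open Matrix

open Real Filter

noncomputable def pFB : ℝ × ℝ → ℝ := fun x => x.1 + x.2 - Real.sqrt (x.1 ^ 2 + x.2 ^ 2)

lemma sqrt_sq_add_sq_lipschitz :
    ∃ K : NNReal, LipschitzWith K (fun x : ℝ × ℝ => Real.sqrt (x.1 ^ 2 + x.2 ^ 2)) := by
  refine ⟨1 * ‖(Complex.equivRealProdCLM.symm : (ℝ×ℝ) →L[ℝ] ℂ)‖₊, ?_⟩
  have : (fun x : ℝ×ℝ => Real.sqrt (x.1^2 + x.2^2)) =
      (fun z : ℂ => ‖z‖) ∘ (fun x : ℝ×ℝ => (Complex.equivRealProdCLM.symm : (ℝ×ℝ) →L[ℝ] ℂ) x) := by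
    funext x
    simp [Complex.norm_def, Complex.normSq_apply, Function.comp, pow_two]
  rw [this]
  exact lipschitzWith_one_norm.comp ((Complex.equivRealProdCLM.symm : (ℝ×ℝ) →L[ℝ] ℂ)).lipschitz

lemma pFB_lipschitz : ∃ K : NNReal, LipschitzWith K pFB := by
  obtain ⟨K, hK⟩ := sqrt_sq_add_sq_lipschitz
  exact ⟨(1 + 1) + K, ((LipschitzWith.prod_fst.add LipschitzWith.prod_snd).sub hK)⟩

lemma sq_ne_zero_of_ne_zero {x : ℝ × ℝ} (hx : x ≠ 0) : x.1 ^ 2 + x.2 ^ 2 ≠ 0 := by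
  intro hc
  apply hx
  have h1 : x.1 = 0 := by nlinarith [sq_nonneg x.1, sq_nonneg x.2]
  have h2 : x.2 = 0 := by nlinarith [sq_nonneg x.1, sq_nonneg x.2]
  exact Prod.ext h1 h2

lemma sqrt_contDiffAt {x : ℝ × ℝ} (hx : x ≠ 0) :
    ContDiffAt ℝ 1 (fun x : ℝ × ℝ => Real.sqrt (x.1 ^ 2 + x.2 ^ 2)) x :=
  ContDiffAt.sqrt (by fun_prop) (sq_ne_zero_of_ne_zero hx)

lemma pFB_contDiffAt {x : ℝ × ℝ} (hx : x ≠ 0) : ContDiffAt ℝ 1 pFB x := by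
  have : ContDiffAt ℝ 1 (fun x : ℝ × ℝ => x.1 + x.2) x := by fun_prop
  exact this.sub (sqrt_contDiffAt hx)

lemma pFB_zero : pFB 0 = 0 := by simp [pFB]

lemma pFB_continuous : Continuous pFB := by
  unfold pFB; fun_prop

lemma master {E : Type*} [NormedAddCommGroup E] [NormedSpace ℝ E]
    (f g : E → ℝ) (U : Set E) (hU : IsOpen U)
    (hf : ContDiff ℝ 1 f) (hg : ContDiffOn ℝ 1 g U)
    (K : NNReal) (hLip : LipschitzWith K g)
    (hvan : ∀ x ∉ U, f x = 0 ∧ g x = 0) :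
    ContDiff ℝ 1 (fun x => f x * g x) := by
  set D : E → E →L[ℝ] ℝ := fun x => g x • fderiv ℝ f x + f x • fderiv ℝ g x with hD
  have hfd : ∀ x, HasFDerivAt (fun x => f x * g x) (D x) x := by
    intro x
    by_cases hx : x ∈ U
    · have hgx : DifferentiableAt ℝ g x :=
        (hg.contDiffAt (hU.mem_nhds hx)).differentiableAt one_ne_zero
      have := ((hf.differentiable one_ne_zero x).hasFDerivAt).mul hgx.hasFDerivAt
      simp only [hD]
      exact this.congr_fderiv (add_comm _ _)
    · obtain ⟨hf0, hg0⟩ := hvan x hx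
      have hD0 : D x = 0 := by simp [hD, hf0, hg0]
      rw [hD0, hasFDerivAt_iff_tendsto]
      apply squeeze_zero (fun y => by positivity) (g := fun y => (K:ℝ) * ‖f y‖)
      · intro y
        rcases eq_or_ne y x with rfl | hyx
        · simp [hf0]
        · have hgy : ‖g y‖ ≤ K * ‖y - x‖ := by
            have := hLip.norm_sub_le y x
            rwa [hg0, sub_zero] at this
          have hnx : (0:ℝ) < ‖y - x‖ := by
            simpa [sub_eq_zero] using norm_pos_iff.mpr (sub_ne_zero.mpr hyx)
          rw [hf0, zero_mul]
          simp only [sub_zero, ContinuousLinearMap.zero_apply]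
          calc ‖y - x‖⁻¹ * ‖f y * g y‖ = ‖y - x‖⁻¹ * (‖f y‖ * ‖g y‖) := by
                rw [norm_mul]
            _ ≤ ‖y - x‖⁻¹ * (‖f y‖ * (K * ‖y - x‖)) := by
                apply mul_le_mul_of_nonneg_left _ (by positivity)
                exact mul_le_mul_of_nonneg_left hgy (norm_nonneg _)
            _ = (K:ℝ) * ‖f y‖ * (‖y - x‖⁻¹ * ‖y - x‖) := by ring
            _ = (K:ℝ) * ‖f y‖ := by
                rw [inv_mul_cancel₀ (ne_of_gt hnx), mul_one]
      · have : Tendsto (fun y => (K:ℝ) * ‖f y‖) (nhds x) (nhds ((K:ℝ) * ‖f x‖)) :=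
          tendsto_const_nhds.mul ((hf.continuous.norm).tendsto x)
        simpa [hf0] using this
  have hDcont : Continuous D := by
    apply Continuous.add
    · exact (hLip.continuous).smul (hf.continuous_fderiv one_ne_zero)
    · rw [continuous_iff_continuousAt]
      intro x
      by_cases hx : x ∈ U
      · exact (hf.continuous.continuousAt).smul
          ((hg.continuousOn_fderiv_of_isOpen hU le_rfl).continuousAt (hU.mem_nhds hx))
      · obtain ⟨hf0, hg0⟩ := hvan x hx
        have h0 : f x • fderiv ℝ g x = (0 : E →L[ℝ] ℝ) := by simp [hf0]
        rw [ContinuousAt, h0]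
        apply squeeze_zero_norm (a := fun y => ‖f y‖ * K)
        · intro y
          rw [norm_smul (f y) (fderiv ℝ g y)]
          apply mul_le_mul_of_nonneg_left _ (norm_nonneg _)
          by_cases hdy : DifferentiableAt ℝ g y
          · exact norm_fderiv_le_of_lipschitz ℝ hLip
          · simp [fderiv_zero_of_not_differentiableAt hdy]
        · have : Tendsto (fun y => ‖f y‖ * (K:ℝ)) (nhds x) (nhds (‖f x‖ * K)) :=
            ((hf.continuous.norm).tendsto x).mul tendsto_const_nhds
          simpa [hf0] using this
  rw [contDiff_one_iff_fderiv]
  refine ⟨fun x => (hfd x).differentiableAt, ?_⟩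
  have : fderiv ℝ (fun x => f x * g x) = D := funext fun x => (hfd x).fderiv
  rw [this]; exact hDcont

lemma contDiff_u : ContDiff ℝ 1 (fun x : ℝ × ℝ => (x.1 + x.2) * Real.sqrt (x.1 ^ 2 + x.2 ^ 2)) := by
  obtain ⟨K, hK⟩ := sqrt_sq_add_sq_lipschitz
  apply master _ _ {x : ℝ × ℝ | x ≠ 0} isOpen_ne (by fun_prop) ?_ K hK ?_
  · intro x hx
    exact (sqrt_contDiffAt hx).contDiffWithinAt
  · intro x hx
    simp only [Set.mem_setOf_eq, not_not] at hx
    subst hx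
    norm_num

lemma contDiff_w : ContDiff ℝ 1 (fun x : ℝ × ℝ => (x.1 * x.2) * max (pFB x) 0) := by
  obtain ⟨K, hK⟩ := pFB_lipschitz
  have hUopen : IsOpen {x : ℝ × ℝ | pFB x ≠ 0} := by
    have : {x : ℝ × ℝ | pFB x ≠ 0} = pFB ⁻¹' ({0}ᶜ) := rfl
    rw [this]
    exact (isOpen_compl_singleton).preimage pFB_continuous
  apply master _ _ {x : ℝ × ℝ | pFB x ≠ 0} hUopen (by fun_prop) ?_ K (hK.max_const 0) ?_
  · intro x hx
    simp only [Set.mem_setOf_eq] at hx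
    rcases lt_or_gt_of_ne hx with hneg | hpos
    · have hev : ∀ᶠ y in nhds x, pFB y < 0 :=
        pFB_continuous.continuousAt.eventually_lt continuousAt_const hneg
      refine (ContDiffAt.congr_of_eventuallyEq (contDiffAt_const (c := (0:ℝ))) ?_).contDiffWithinAt
      filter_upwards [hev] with y hy
      exact max_eq_right hy.le
    · have hx0 : x ≠ 0 := by
        intro h0; rw [h0, pFB_zero] at hx; exact hx rfl
      have hev : ∀ᶠ y in nhds x, 0 < pFB y :=
        continuousAt_const.eventually_lt pFB_continuous.continuousAt hpos
      refine (ContDiffAt.congr_of_eventuallyEq (pFB_contDiffAt hx0) ?_).contDiffWithinAt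
      filter_upwards [hev] with y hy
      exact max_eq_left hy.le
  · intro x hx
    simp only [Set.mem_setOf_eq, not_not] at hx
    constructor
    · have h' : x.1 + x.2 = Real.sqrt (x.1 ^ 2 + x.2 ^ 2) := by
        have := hx; unfold pFB at this; linarith
      have h2 : (x.1 + x.2) ^ 2 = x.1 ^ 2 + x.2 ^ 2 := by
        rw [h']; exact Real.sq_sqrt (by positivity)
      nlinarith
    · rw [hx]; exact max_self 0

lemma contDiff_s1 : ContDiff ℝ 1 (fun t : ℝ => t * max t 0) := by
  apply master _ _ {t : ℝ | t ≠ 0} isOpen_ne contDiff_id ?_ 1 (LipschitzWith.max_const LipschitzWith.id 0) ?_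
  · intro t ht
    simp only [Set.mem_setOf_eq] at ht
    rcases lt_or_gt_of_ne ht with hneg | hpos
    · have hev : ∀ᶠ y in nhds t, y < 0 :=
        continuousAt_id.eventually_lt continuousAt_const hneg
      refine (ContDiffAt.congr_of_eventuallyEq (contDiffAt_const (c := (0:ℝ))) ?_).contDiffWithinAt
      filter_upwards [hev] with y hy
      exact max_eq_right hy.le
    · have hev : ∀ᶠ y in nhds t, (0:ℝ) < y :=
        continuousAt_const.eventually_lt continuousAt_id hpos
      refine (ContDiffAt.congr_of_eventuallyEq contDiffAt_id ?_).contDiffWithinAt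
      filter_upwards [hev] with y hy
      exact max_eq_left hy.le
  · intro t ht
    simp only [Set.mem_setOf_eq, not_not] at ht
    exact ⟨ht, by rw [ht]; exact max_self 0⟩

lemma max_sq (a : ℝ) : max a 0 * max a 0 = a * max a 0 := by
  rcases le_or_gt a 0 with h | h
  · rw [max_eq_right h]; ring
  · rw [max_eq_left h.le]

lemma cross_id (a b : ℝ) :
    (a + b - Real.sqrt (a ^ 2 + b ^ 2)) * max a 0 * max b 0 =
      a * b * max (a + b - Real.sqrt (a ^ 2 + b ^ 2)) 0 := by
  rcases le_or_gt a 0 with ha | ha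
  · rw [max_eq_right ha, mul_zero, zero_mul]
    have hb : b ≤ Real.sqrt (a ^ 2 + b ^ 2) := by
      have h1 : b ≤ |b| := le_abs_self b
      have h2 : |b| ≤ Real.sqrt (a ^ 2 + b ^ 2) := by
        rw [← Real.sqrt_sq_eq_abs]
        exact Real.sqrt_le_sqrt (by nlinarith [sq_nonneg a])
      linarith
    rw [max_eq_right (by linarith), mul_zero]
  · rcases le_or_gt b 0 with hb | hb
    · rw [max_eq_right hb, mul_zero]
      have ha' : a ≤ Real.sqrt (a ^ 2 + b ^ 2) := by
        have h1 : a ≤ |a| := le_abs_self a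
        have h2 : |a| ≤ Real.sqrt (a ^ 2 + b ^ 2) := by
          rw [← Real.sqrt_sq_eq_abs]
          exact Real.sqrt_le_sqrt (by nlinarith [sq_nonneg b])
        linarith
      rw [max_eq_right (by linarith), mul_zero]
    · have hle : Real.sqrt (a ^ 2 + b ^ 2) ≤ a + b := by
        have := Real.sqrt_le_sqrt (show a ^ 2 + b ^ 2 ≤ (a + b) ^ 2 by nlinarith)
        rwa [Real.sqrt_sq (by linarith)] at this
      rw [max_eq_left ha.le, max_eq_left hb.le,
        max_eq_left (show (0:ℝ) ≤ a + b - Real.sqrt (a ^ 2 + b ^ 2) by linarith)]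
      ring

lemma contDiff_phiSq (α : ℝ) :
    ContDiff ℝ 1 (fun x : ℝ × ℝ =>
      (α * (x.1 + x.2 - Real.sqrt (x.1 ^ 2 + x.2 ^ 2)) + (1 - α) * max x.1 0 * max x.2 0) ^ 2) := by
  have heq : (fun x : ℝ × ℝ =>
      (α * (x.1 + x.2 - Real.sqrt (x.1 ^ 2 + x.2 ^ 2)) + (1 - α) * max x.1 0 * max x.2 0) ^ 2)
      = fun x : ℝ × ℝ =>
        α ^ 2 * ((x.1 + x.2) ^ 2 + (x.1 ^ 2 + x.2 ^ 2))
          - 2 * α ^ 2 * ((x.1 + x.2) * Real.sqrt (x.1 ^ 2 + x.2 ^ 2))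
          + 2 * (α * (1 - α)) * ((x.1 * x.2) * max (pFB x) 0)
          + (1 - α) ^ 2 * ((x.1 * max x.1 0) * (x.2 * max x.2 0)) := by
    funext x
    have hr : Real.sqrt (x.1 ^ 2 + x.2 ^ 2) ^ 2 = x.1 ^ 2 + x.2 ^ 2 := Real.sq_sqrt (by positivity)
    have hc := cross_id x.1 x.2
    have hma := max_sq x.1
    have hmb := max_sq x.2
    unfold pFB
    linear_combination (α ^ 2) * hr + (2 * α * (1 - α)) * hc
      + ((1 - α) ^ 2 * (max x.2 0 * max x.2 0)) * hma
      + ((1 - α) ^ 2 * x.1 * max x.1 0) * hmb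
  rw [heq]
  have h1 : ContDiff ℝ 1 (fun x : ℝ × ℝ => (x.1 + x.2) ^ 2 + (x.1 ^ 2 + x.2 ^ 2)) := by fun_prop
  exact (((contDiff_const.mul h1).sub (contDiff_const.mul contDiff_u)).add
      (contDiff_const.mul contDiff_w)).add
    (contDiff_const.mul ((contDiff_s1.comp contDiff_fst).mul (contDiff_s1.comp contDiff_snd)))

@[fun_prop]
lemma contDiff_mulVec_comp {ι κ : Type*} [Fintype ι] [Fintype κ] {E : Type*}
    [NormedAddCommGroup E] [NormedSpace ℝ E] (M : Matrix κ ι ℝ) (g : E → ι → ℝ)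
    (hg : ContDiff ℝ 1 g) (k : κ) : ContDiff ℝ 1 (fun x => M.mulVec (g x) k) := by
  simp only [Matrix.mulVec, dotProduct]
  exact ContDiff.sum fun l _ => contDiff_const.mul ((contDiff_pi.mp hg) l)


/-- The merit function `θ(x) = ½‖R(x)‖₂²` associated with the penalized
Fischer–Burmeister reformulation of the proximal subproblem is continuously
differentiable on `ℝⁿ × ℝᵐ × ℝ^q`. -/
theorem merit_function_contDiff (n m q : ℕ)
    (H : Matrix (Fin n) (Fin n) ℝ) (hH : H.PosSemidef)
    (f : Fin n → ℝ) (G : Matrix (Fin m) (Fin n) ℝ) (h : Fin m → ℝ)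
    (A : Matrix (Fin q) (Fin n) ℝ) (b : Fin q → ℝ)
    (α : ℝ) (hα : α ∈ Set.Ioo (0:ℝ) 1)
    (σ : ℝ) (hσ : 0 < σ)
    (zbar : Fin n → ℝ) (lbar : Fin m → ℝ) (vbar : Fin q → ℝ) :
    ContDiff ℝ 1 (fun x : (Fin n → ℝ) × (Fin m → ℝ) × (Fin q → ℝ) =>
      (1 / 2) *
        ((∑ i, ((H.mulVec x.1 + f + Gᵀ.mulVec x.2.1 + Aᵀ.mulVec x.2.2 +
            σ • (x.1 - zbar)) i) ^ 2) +
         (∑ i, ((h - G.mulVec x.1 + σ • (x.2.1 - lbar)) i) ^ 2) +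
         (∑ j, (α * ((b - A.mulVec x.1 + σ • (x.2.2 - vbar)) j + x.2.2 j -
              Real.sqrt (((b - A.mulVec x.1 + σ • (x.2.2 - vbar)) j) ^ 2 + (x.2.2 j) ^ 2)) +
            (1 - α) * max ((b - A.mulVec x.1 + σ • (x.2.2 - vbar)) j) 0 *
              max (x.2.2 j) 0) ^ 2))) := by
  have key1 : ∀ i, ContDiff ℝ 1 (fun x : (Fin n → ℝ) × (Fin m → ℝ) × (Fin q → ℝ) =>
      (H.mulVec x.1 + f + Gᵀ.mulVec x.2.1 + Aᵀ.mulVec x.2.2 + σ • (x.1 - zbar)) i) := by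
    intro i
    simp only [Pi.add_apply, Pi.smul_apply, Pi.sub_apply, smul_eq_mul]
    fun_prop
  have key2 : ∀ i, ContDiff ℝ 1 (fun x : (Fin n → ℝ) × (Fin m → ℝ) × (Fin q → ℝ) =>
      (h - G.mulVec x.1 + σ • (x.2.1 - lbar)) i) := by
    intro i
    simp only [Pi.add_apply, Pi.smul_apply, Pi.sub_apply, smul_eq_mul]
    fun_prop
  have key3 : ∀ j, ContDiff ℝ 1 (fun x : (Fin n → ℝ) × (Fin m → ℝ) × (Fin q → ℝ) =>
      (((b - A.mulVec x.1 + σ • (x.2.2 - vbar)) j, x.2.2 j) : ℝ × ℝ)) := by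
    intro j
    apply ContDiff.prodMk
    · simp only [Pi.add_apply, Pi.smul_apply, Pi.sub_apply, smul_eq_mul]
      fun_prop
    · fun_prop
  apply ContDiff.mul contDiff_const
  apply ContDiff.add
  apply ContDiff.add
  · exact ContDiff.sum fun i _ => (key1 i).pow 2
  · exact ContDiff.sum fun i _ => (key2 i).pow 2
  · exact ContDiff.sum fun j _ => (contDiff_phiSq α).comp (key3 j)
end

section
/- (Regularity of the C-subdifferential) Let σ > 0 and let γ, μ ∈ ℝ^q satisfy γ_j ≥ 0, μ_j ≥ 0, and (γ_j, μ_j) ≠ (0,0) for every j = 1,…,q. Then the (n+m+q)×(n+m+q) block matrix V = [[H + σI_n, Gᵀ, Aᵀ], [−G, σI_m, 0], [−diag(γ)·A, 0, diag(μ + σγ)]] is nonsingular. -/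
open Matrix

/-- Regularity of the C-subdifferential: every element of the C-subdifferential
of the proximally regularized penalized Fischer–Burmeister residual is a
nonsingular matrix. -/
theorem c_subdifferential_nonsingular (n m q : ℕ)
    (H : Matrix (Fin n) (Fin n) ℝ) (hH : H.PosSemidef)
    (G : Matrix (Fin m) (Fin n) ℝ) (A : Matrix (Fin q) (Fin n) ℝ)
    (σ : ℝ) (hσ : 0 < σ)
    (γ μ : Fin q → ℝ)
    (hγ : ∀ j, 0 ≤ γ j) (hμ : ∀ j, 0 ≤ μ j)
    (hnz : ∀ j, (γ j, μ j) ≠ (0, 0)) :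
    IsUnit
      (Matrix.fromBlocks
        (Matrix.fromBlocks (H + σ • (1 : Matrix (Fin n) (Fin n) ℝ)) Gᵀ
          (-G) (σ • (1 : Matrix (Fin m) (Fin m) ℝ)))
        (Matrix.fromRows Aᵀ (0 : Matrix (Fin m) (Fin q) ℝ))
        (Matrix.fromCols (-(Matrix.diagonal γ * A)) (0 : Matrix (Fin q) (Fin m) ℝ))
        (Matrix.diagonal (μ + σ • γ))) := by
  have hpos : ∀ j, 0 < μ j + σ * γ j := by
    intro j
    rcases lt_or_eq_of_le (hγ j) with h | h
    · nlinarith [hμ j]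
    · have hμj : μ j ≠ 0 := fun h0 => hnz j (by rw [Prod.mk.injEq]; exact ⟨h.symm, h0⟩)
      have := lt_of_le_of_ne (hμ j) (Ne.symm hμj)
      nlinarith
  rw [← Matrix.mulVec_injective_iff_isUnit]
  rw [← Matrix.coe_mulVecLin, ← LinearMap.ker_eq_bot, LinearMap.ker_eq_bot']
  intro v hv
  rw [Matrix.mulVecLin_apply] at hv
  set x : Fin n → ℝ := fun i => v (Sum.inl (Sum.inl i)) with hx
  set y : Fin m → ℝ := fun i => v (Sum.inl (Sum.inr i)) with hy
  set w : Fin q → ℝ := fun j => v (Sum.inr j) with hw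
  have hvel : v = Sum.elim (Sum.elim x y) w := by
    funext i; rcases i with (i | i) | j <;> rfl
  rw [hvel, Matrix.fromBlocks_mulVec] at hv
  simp only [Sum.elim_comp_inl, Sum.elim_comp_inr, Matrix.fromBlocks_mulVec,
    Matrix.fromRows_mulVec, Matrix.fromCols_mulVec_sumElim] at hv
  -- top-left equations
  have e1 : (H + σ • (1 : Matrix (Fin n) (Fin n) ℝ)) *ᵥ x + Gᵀ *ᵥ y + Aᵀ *ᵥ w = 0 := by
    funext i
    have := congrFun hv (Sum.inl (Sum.inl i))
    simp only [Pi.add_apply, Sum.elim_inl, Pi.zero_apply] at this ⊢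
    linarith
  have e2 : G *ᵥ x = σ • y := by
    funext i
    have := congrFun hv (Sum.inl (Sum.inr i))
    simp only [Pi.add_apply, Sum.elim_inl, Sum.elim_inr, Pi.zero_apply,
      Matrix.neg_mulVec, Pi.neg_apply, Matrix.smul_mulVec, Matrix.one_mulVec,
      Matrix.zero_mulVec, Pi.smul_apply, smul_eq_mul, add_zero] at this
    simp only [Pi.smul_apply, smul_eq_mul]
    linarith
  have e3 : ∀ j, (μ j + σ * γ j) * w j = γ j * (A *ᵥ x) j := by
    intro j
    have := congrFun hv (Sum.inr j)
    simp only [Pi.add_apply, Sum.elim_inr, Pi.zero_apply, Matrix.neg_mulVec,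
      Pi.neg_apply, Matrix.zero_mulVec, add_zero, Matrix.mulVec_diagonal,
      ← Matrix.mulVec_mulVec, Pi.smul_apply, smul_eq_mul] at this
    linarith
  -- dot product with x
  have hdot : x ⬝ᵥ ((H + σ • (1 : Matrix (Fin n) (Fin n) ℝ)) *ᵥ x) + x ⬝ᵥ (Gᵀ *ᵥ y)
      + x ⬝ᵥ (Aᵀ *ᵥ w) = 0 := by
    rw [← dotProduct_add, ← dotProduct_add, e1, dotProduct_zero]
  have hGterm : x ⬝ᵥ (Gᵀ *ᵥ y) = σ * (y ⬝ᵥ y) := by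
    rw [Matrix.dotProduct_mulVec, Matrix.vecMul_transpose, e2, smul_dotProduct, smul_eq_mul]
  have hAterm : 0 ≤ x ⬝ᵥ (Aᵀ *ᵥ w) := by
    rw [Matrix.dotProduct_mulVec, Matrix.vecMul_transpose, dotProduct]
    apply Finset.sum_nonneg
    intro j _
    rcases eq_or_lt_of_le (hγ j) with h | h
    · have hwj : w j = 0 := by
        have h3 := e3 j
        rw [← h] at h3
        have hp := hpos j
        rw [← h] at hp
        simp only [zero_mul] at h3
        rcases mul_eq_zero.mp h3 with h' | h'
        · exact absurd h' (ne_of_gt hp)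
        · exact h'
      rw [hwj, mul_zero]
    · have hax : (A *ᵥ x) j = (μ j + σ * γ j) * w j / γ j := by
        field_simp
        linarith [e3 j]
      rw [hax, div_mul_eq_mul_div]
      apply div_nonneg _ (le_of_lt h)
      nlinarith [mul_self_nonneg (w j), hpos j]
  have hHterm : 0 ≤ x ⬝ᵥ (H *ᵥ x) := by simpa using hH.dotProduct_mulVec_nonneg x
  have hxterm : x ⬝ᵥ ((H + σ • (1 : Matrix (Fin n) (Fin n) ℝ)) *ᵥ x)
      = x ⬝ᵥ (H *ᵥ x) + σ * (x ⬝ᵥ x) := by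
    rw [Matrix.add_mulVec, dotProduct_add, Matrix.smul_mulVec, Matrix.one_mulVec,
      dotProduct_smul, smul_eq_mul]
  rw [hxterm, hGterm] at hdot
  have hxx : 0 ≤ x ⬝ᵥ x := Finset.sum_nonneg fun i _ => mul_self_nonneg (x i)
  have hyy : 0 ≤ y ⬝ᵥ y := Finset.sum_nonneg fun i _ => mul_self_nonneg (y i)
  have hx0 : x = 0 := by
    have hxz : x ⬝ᵥ x = 0 := by nlinarith
    exact (dotProduct_self_eq_zero (v := x)).mp hxz
  have hy0 : y = 0 := by
    have := e2
    rw [hx0, Matrix.mulVec_zero] at this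
    funext i
    have hi := congrFun this.symm i
    simp only [Pi.smul_apply, Pi.zero_apply, smul_eq_mul] at hi
    rcases mul_eq_zero.mp hi with h | h
    · exact absurd h (ne_of_gt hσ)
    · exact h
  have hw0 : w = 0 := by
    funext j
    have h3 := e3 j
    rw [hx0, Matrix.mulVec_zero] at h3
    simp only [Pi.zero_apply, mul_zero] at h3
    rcases mul_eq_zero.mp h3 with h | h
    · exact absurd h (ne_of_gt (hpos j))
    · exact h
  rw [hvel, hx0, hy0, hw0]
  funext i; rcases i with (i | i) | j <;> rfl
end

section
/- (Natural residual is a global error bound for the strongly monotone subproblem VI) Let C ⊆ ℝᴺ be a nonempty closed convex set, M an N×N real matrix, w ∈ ℝᴺ, and m > 0 such that ⟨Md, d⟩ ≥ m‖d‖² for all d ∈ ℝᴺ. Let x* ∈ C be a solution of the variational inequality ⟨Mx* + w, y − x*⟩ ≥ 0 for all y ∈ C. Then there exists τ > 0 such that for every x ∈ ℝᴺ, ‖x − x*‖ ≤ τ·‖x − Π_C(x − (Mx + w))‖, where Π_C denotes the Euclidean (metric) projection onto C. -/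
open Matrix

/-- The Euclidean norm on `Fin N → ℝ`. -/
noncomputable def enormV {N : ℕ} (x : Fin N → ℝ) : ℝ :=
  Real.sqrt (x ⬝ᵥ x)

noncomputable def toE {N : ℕ} : (Fin N → ℝ) ≃ₗ[ℝ] EuclideanSpace ℝ (Fin N) :=
  (WithLp.linearEquiv 2 ℝ (Fin N → ℝ)).symm

lemma enormV_eq' {N : ℕ} (x : Fin N → ℝ) :
    Real.sqrt (x ⬝ᵥ x) = ‖(toE x : EuclideanSpace ℝ (Fin N))‖ := by
  rw [EuclideanSpace.norm_eq]
  congr 1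
  simp [dotProduct, toE, sq]

lemma dot_eq' {N : ℕ} (x y : Fin N → ℝ) :
    x ⬝ᵥ y = (inner ℝ (toE x) (toE y) : ℝ) := by
  simp [dotProduct, toE, PiLp.inner_apply, RCLike.inner_apply, mul_comm]

lemma proj_char {E : Type*} [NormedAddCommGroup E] [InnerProductSpace ℝ E]
    {C : Set E} (hC : Convex ℝ C) {x z : E} (hz : z ∈ C)
    (hmin : ∀ c ∈ C, ‖x - z‖ ≤ ‖x - c‖) {c : E} (hc : c ∈ C) :
    (inner ℝ (x - z) (c - z) : ℝ) ≤ 0 := by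
  set a : ℝ := inner ℝ (x - z) (c - z) with ha
  set b : ℝ := ‖c - z‖ ^ 2 with hb
  have hb0 : 0 ≤ b := by positivity
  have key : ∀ t : ℝ, 0 < t → t ≤ 1 → 2 * t * a ≤ t ^ 2 * b := by
    intro t ht ht1
    have hmem : z + t • (c - z) ∈ C := by
      have := hC hz hc (by linarith : (0:ℝ) ≤ 1 - t) ht.le (by ring)
      convert this using 1
      module
    have h1 := hmin _ hmem
    have h2 : x - (z + t • (c - z)) = (x - z) - t • (c - z) := by abel
    rw [h2] at h1
    have h3 : ‖x - z‖ ^ 2 ≤ ‖(x - z) - t • (c - z)‖ ^ 2 :=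
      pow_le_pow_left₀ (norm_nonneg _) h1 2
    have hexp : ‖(x - z) - t • (c - z)‖ ^ 2
        = ‖x - z‖ ^ 2 - 2 * inner ℝ (x - z) (t • (c - z)) + ‖t • (c - z)‖ ^ 2 :=
      norm_sub_sq_real _ _
    rw [real_inner_smul_right] at hexp
    have h5 : ‖t • (c - z)‖ ^ 2 = t ^ 2 * b := by
      rw [norm_smul]
      simp [abs_of_pos ht, hb]
      ring
    rw [h5] at hexp
    rw [hexp] at h3
    nlinarith
  by_contra h
  push_neg at h
  set t : ℝ := min 1 (a / (b + 1)) with htd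
  have ht0 : 0 < t := lt_min one_pos (by positivity)
  have ht1 : t ≤ 1 := min_le_left _ _
  have hk := key t ht0 ht1
  have htb : t * b ≤ a := by
    have h1 : t ≤ a / (b + 1) := min_le_right _ _
    have h2 : t * b ≤ (a / (b + 1)) * b := by nlinarith
    have h3 : (a / (b + 1)) * b ≤ a := by
      rw [div_mul_eq_mul_div, div_le_iff₀ (by linarith)]
      nlinarith
    linarith
  nlinarith

/-- The natural residual is a global error bound for a strongly monotone
variational inequality over a nonempty closed convex set: if `proj` is the
Euclidean projection onto `C` and `xstar` solves the VI, then there is `τ > 0`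
with `‖x − x*‖ ≤ τ‖x − Π_C(x − (Mx + w))‖` for all `x`. -/
theorem natural_residual_global_error_bound (N : ℕ)
    (C : Set (Fin N → ℝ)) (hCne : C.Nonempty) (hCclosed : IsClosed C) (hCconv : Convex ℝ C)
    (M : Matrix (Fin N) (Fin N) ℝ) (w : Fin N → ℝ)
    (mconst : ℝ) (hm : 0 < mconst)
    (hstrong : ∀ d : Fin N → ℝ, mconst * (enormV d) ^ 2 ≤ (M.mulVec d) ⬝ᵥ d)
    (xstar : Fin N → ℝ) (hxstar : xstar ∈ C)
    (hVI : ∀ y ∈ C, 0 ≤ (M.mulVec xstar + w) ⬝ᵥ (y - xstar))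
    (proj : (Fin N → ℝ) → (Fin N → ℝ))
    (hproj : ∀ x, proj x ∈ C ∧ ∀ c ∈ C, enormV (x - proj x) ≤ enormV (x - c)) :
    ∃ τ > (0:ℝ), ∀ x : Fin N → ℝ,
      enormV (x - xstar) ≤ τ * enormV (x - proj (x - (M.mulVec x + w))) := by
  classical
  have henorm : ∀ x : Fin N → ℝ, enormV x = ‖(toE x : EuclideanSpace ℝ (Fin N))‖ :=
    fun x => enormV_eq' x
  have henorm_nonneg : ∀ x : Fin N → ℝ, 0 ≤ enormV x := fun x => by
    rw [henorm]; exact norm_nonneg _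
  have hsq : ∀ x : Fin N → ℝ, enormV x ^ 2 = x ⬝ᵥ x := fun x => by
    rw [henorm, dot_eq', ← real_inner_self_eq_norm_sq]
  -- Cauchy–Schwarz
  have hCS : ∀ x y : Fin N → ℝ, x ⬝ᵥ y ≤ enormV x * enormV y := fun x y => by
    rw [henorm, henorm, dot_eq']
    exact real_inner_le_norm _ _
  -- operator norm bound for M
  set T : EuclideanSpace ℝ (Fin N) →L[ℝ] EuclideanSpace ℝ (Fin N) :=
    LinearMap.toContinuousLinearMap
      ((toE : (Fin N → ℝ) ≃ₗ[ℝ] _).toLinearMap ∘ₗ M.mulVecLin ∘ₗ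
        ((toE : (Fin N → ℝ) ≃ₗ[ℝ] _).symm.toLinearMap)) with hT
  set L : ℝ := ‖T‖ with hLdef
  have hL0 : 0 ≤ L := norm_nonneg _
  have hLbound : ∀ d : Fin N → ℝ, enormV (M.mulVec d) ≤ L * enormV d := by
    intro d
    have h1 := T.le_opNorm (toE d)
    have h2 : T (toE d) = toE (M.mulVec d) := by
      simp [hT]
    rw [h2] at h1
    rw [henorm, henorm]
    exact h1
  refine ⟨(1 + L) / mconst, by positivity, fun x => ?_⟩
  set x' : Fin N → ℝ := x - (M.mulVec x + w) with hx'
  set z : Fin N → ℝ := proj x' with hzdef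
  obtain ⟨hzC, hzmin⟩ := hproj x'
  set d : Fin N → ℝ := x - xstar with hd
  set r : Fin N → ℝ := x - z with hr
  -- projection characterization in Euclidean space
  have hK : Convex ℝ ((toE : (Fin N → ℝ) ≃ₗ[ℝ] _).toLinearMap '' C) :=
    hCconv.linear_image _
  have hchar : (inner ℝ (toE x' - toE z) (toE xstar - toE z) : ℝ) ≤ 0 := by
    refine proj_char hK ⟨z, hzC, rfl⟩ ?_ ⟨xstar, hxstar, rfl⟩
    rintro c ⟨c0, hc0, rfl⟩
    have := hzmin c0 hc0
    rw [henorm, henorm] at this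
    simpa [map_sub] using this
  have hchar' : (x' - z) ⬝ᵥ (xstar - z) ≤ 0 := by
    rw [dot_eq']
    simpa [map_sub] using hchar
  have hVIz : 0 ≤ (M.mulVec xstar + w) ⬝ᵥ (z - xstar) := hVI z hzC
  -- key algebraic inequality: (r - M d) ⬝ᵥ (r - d) ≤ 0
  have hkey : (r - M.mulVec d) ⬝ᵥ (r - d) ≤ 0 := by
    have e1 : r - M.mulVec d = (x' - z) + (M.mulVec xstar + w) := by
      simp only [hr, hx', hd, Matrix.mulVec_sub]
      abel
    have e2 : r - d = xstar - z := by
      simp only [hr, hd]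
      abel
    rw [e1, e2, add_dotProduct]
    have : (M.mulVec xstar + w) ⬝ᵥ (xstar - z) = -((M.mulVec xstar + w) ⬝ᵥ (z - xstar)) := by
      rw [← dotProduct_neg]
      congr 1
      abel
    rw [this]
    linarith
  -- expand
  have hexp : r ⬝ᵥ r - r ⬝ᵥ d - (M.mulVec d) ⬝ᵥ r + (M.mulVec d) ⬝ᵥ d ≤ 0 := by
    have := hkey
    simp only [sub_dotProduct, dotProduct_sub] at this
    linarith
  have hstr := hstrong d
  have hcs1 : r ⬝ᵥ d ≤ enormV r * enormV d := hCS r d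
  have hcs2 : (M.mulVec d) ⬝ᵥ r ≤ L * enormV d * enormV r := by
    calc (M.mulVec d) ⬝ᵥ r ≤ enormV (M.mulVec d) * enormV r := hCS _ r
    _ ≤ (L * enormV d) * enormV r :=
        mul_le_mul_of_nonneg_right (hLbound d) (henorm_nonneg r)
    _ = L * enormV d * enormV r := by ring
  have hrr : r ⬝ᵥ r = enormV r ^ 2 := (hsq r).symm
  have hmain : mconst * enormV d ^ 2 ≤ (1 + L) * enormV r * enormV d := by
    nlinarith [henorm_nonneg r, henorm_nonneg d, sq_nonneg (enormV r)]
  rcases eq_or_lt_of_le (henorm_nonneg d) with h0 | h0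
  · rw [← h0]
    have := henorm_nonneg r
    positivity
  · have h1 : mconst * enormV d ≤ (1 + L) * enormV r := by
      nlinarith
    rw [div_mul_eq_mul_div, le_div_iff₀ hm]
    nlinarith
end

section
/- Under the stated proximal-iterate hypotheses, the limit direction satisfies A·δz ≤ 0, G·δz = 0, and δv ≥ 0. -/
open Matrix Filter Topology

/-- Under the proximal-iterate hypotheses, the limit direction satisfies
`A·δz ≤ 0`, `G·δz = 0`, and `δv ≥ 0`. -/
theorem prox_limit_direction_cone_properties (n m q : ℕ)
    (H : Matrix (Fin n) (Fin n) ℝ) (hH : H.PosSemidef)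
    (f : Fin n → ℝ) (G : Matrix (Fin m) (Fin n) ℝ) (h : Fin m → ℝ)
    (A : Matrix (Fin q) (Fin n) ℝ) (b : Fin q → ℝ)
    (σ : ℝ) (hσ : 0 < σ)
    (z : ℕ → Fin n → ℝ) (lam : ℕ → Fin m → ℝ) (v : ℕ → Fin q → ℝ)
    (heq1 : ∀ k : ℕ, H.mulVec (z (k + 1)) + f + Gᵀ.mulVec (lam (k + 1)) +
      Aᵀ.mulVec (v (k + 1)) + σ • (z (k + 1) - z k) = 0)
    (heq2 : ∀ k : ℕ, h - G.mulVec (z (k + 1)) + σ • (lam (k + 1) - lam k) = 0)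
    (heq3 : ∀ k : ℕ, (b - A.mulVec (z (k + 1)) + σ • (v (k + 1) - v k)) ⬝ᵥ v (k + 1) = 0)
    (heq4 : ∀ k : ℕ, 0 ≤ v (k + 1))
    (heq5 : ∀ k : ℕ, 0 ≤ b - A.mulVec (z (k + 1)) + σ • (v (k + 1) - v k))
    (δz : Fin n → ℝ) (δlam : Fin m → ℝ) (δv : Fin q → ℝ)
    (hd1 : Tendsto (fun k => z (k + 1) - z k) atTop (𝓝 δz))
    (hd2 : Tendsto (fun k => lam (k + 1) - lam k) atTop (𝓝 δlam))
    (hd3 : Tendsto (fun k => v (k + 1) - v k) atTop (𝓝 δv))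
    (ha1 : Tendsto (fun k : ℕ => (1 / (k : ℝ)) • z k) atTop (𝓝 δz))
    (ha2 : Tendsto (fun k : ℕ => (1 / (k : ℝ)) • lam k) atTop (𝓝 δlam))
    (ha3 : Tendsto (fun k : ℕ => (1 / (k : ℝ)) • v k) atTop (𝓝 δv)) :
    A.mulVec δz ≤ 0 ∧ G.mulVec δz = 0 ∧ 0 ≤ δv := by

  have hinv : Tendsto (fun k : ℕ => (1 / ((k : ℝ) + 1))) atTop (𝓝 0) := by
    have := tendsto_one_div_add_atTop_nhds_zero_nat (𝕜 := ℝ)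
    simpa using this
  have hshift : Tendsto (fun k : ℕ => (k + 1 : ℕ)) atTop atTop :=
    tendsto_add_atTop_nat 1
  -- limit of (1/(k+1)) • A.mulVec (z (k+1))
  have hA : Tendsto (fun k : ℕ => (1 / ((k : ℝ) + 1)) • A.mulVec (z (k + 1))) atTop
      (𝓝 (A.mulVec δz)) := by
    have hcont : Continuous A.mulVecLin := A.mulVecLin.continuous_of_finiteDimensional
    have := ((hcont.tendsto δz).comp ha1).comp hshift
    simpa [Function.comp_def, Matrix.mulVecLin_apply, Matrix.mulVec_smul, Nat.cast_add] using this
  have hG : Tendsto (fun k : ℕ => (1 / ((k : ℝ) + 1)) • G.mulVec (z (k + 1))) atTop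
      (𝓝 (G.mulVec δz)) := by
    have hcont : Continuous G.mulVecLin := G.mulVecLin.continuous_of_finiteDimensional
    have := ((hcont.tendsto δz).comp ha1).comp hshift
    simpa [Function.comp_def, Matrix.mulVecLin_apply, Matrix.mulVec_smul, Nat.cast_add] using this
  refine ⟨?_, ?_, ?_⟩
  · -- A δz ≤ 0
    intro i
    have hlhs : Tendsto (fun k : ℕ => (1 / ((k : ℝ) + 1)) * A.mulVec (z (k + 1)) i) atTop
        (𝓝 (A.mulVec δz i)) := by
      have := (tendsto_pi_nhds.mp hA) i
      simpa [smul_eq_mul] using this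
    have hrhs : Tendsto (fun k : ℕ => (1 / ((k : ℝ) + 1)) * (b i + σ * (v (k + 1) i - v k i)))
        atTop (𝓝 0) := by
      have hv : Tendsto (fun k : ℕ => b i + σ * (v (k + 1) i - v k i)) atTop
          (𝓝 (b i + σ * δv i)) := by
        have := (tendsto_pi_nhds.mp hd3) i
        exact tendsto_const_nhds.add (tendsto_const_nhds.mul (by simpa using this))
      simpa using hinv.mul hv
    have hle : ∀ k : ℕ, (1 / ((k : ℝ) + 1)) * A.mulVec (z (k + 1)) i ≤
        (1 / ((k : ℝ) + 1)) * (b i + σ * (v (k + 1) i - v k i)) := by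
      intro k
      have h5 := heq5 k i
      simp only [Pi.zero_apply, Pi.add_apply, Pi.sub_apply, Pi.smul_apply, smul_eq_mul] at h5
      have : A.mulVec (z (k + 1)) i ≤ b i + σ * (v (k + 1) i - v k i) := by linarith
      have hpos : (0 : ℝ) ≤ 1 / ((k : ℝ) + 1) := by positivity
      exact mul_le_mul_of_nonneg_left this hpos
    simpa using le_of_tendsto_of_tendsto hlhs hrhs (Eventually.of_forall hle)
  · -- G δz = 0
    have hG' : Tendsto (fun k : ℕ => (1 / ((k : ℝ) + 1)) • G.mulVec (z (k + 1))) atTop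
        (𝓝 0) := by
      have heqG : ∀ k : ℕ, (1 / ((k : ℝ) + 1)) • G.mulVec (z (k + 1)) =
          (1 / ((k : ℝ) + 1)) • (h + σ • (lam (k + 1) - lam k)) := by
        intro k
        have h2 := heq2 k
        have : G.mulVec (z (k + 1)) = h + σ • (lam (k + 1) - lam k) := by
          apply sub_eq_zero.mp
          calc G.mulVec (z (k + 1)) - (h + σ • (lam (k + 1) - lam k))
              = -(h - G.mulVec (z (k + 1)) + σ • (lam (k + 1) - lam k)) := by abel
            _ = 0 := by rw [h2, neg_zero]
        rw [this]
      have hlim : Tendsto (fun k : ℕ => (1 / ((k : ℝ) + 1)) • (h + σ • (lam (k + 1) - lam k)))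
          atTop (𝓝 ((0 : ℝ) • (h + σ • δlam))) := by
        exact hinv.smul (tendsto_const_nhds.add (hd2.const_smul σ))
      rw [funext heqG]
      simpa using hlim
    exact tendsto_nhds_unique hG hG'
  · -- 0 ≤ δv
    intro i
    have hvi : Tendsto (fun k : ℕ => (1 / (k : ℝ)) * v k i) atTop (𝓝 (δv i)) := by
      have := (tendsto_pi_nhds.mp ha3) i
      simpa [smul_eq_mul] using this
    refine ge_of_tendsto hvi ?_
    filter_upwards [eventually_ge_atTop 1] with k hk
    obtain ⟨j, rfl⟩ := Nat.exists_eq_add_of_le hk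
    have h4 := heq4 j (i)
    have hpos : (0 : ℝ) ≤ 1 / ((1 + j : ℕ) : ℝ) := by positivity
    have : v (1 + j) = v (j + 1) := by rw [Nat.add_comm]
    rw [this]
    exact mul_nonneg hpos (by simpa using h4)
end

section
/- Under the stated proximal-iterate hypotheses, the limit direction satisfies H·δz = 0. -/
set_option maxHeartbeats 1000000


open Matrix Filter Topology

/-- Under the proximal-iterate hypotheses, the limit direction satisfies `H·δz = 0`. -/
theorem prox_limit_direction_hessian_kernel (n m q : ℕ)
    (H : Matrix (Fin n) (Fin n) ℝ) (hH : H.PosSemidef)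
    (f : Fin n → ℝ) (G : Matrix (Fin m) (Fin n) ℝ) (h : Fin m → ℝ)
    (A : Matrix (Fin q) (Fin n) ℝ) (b : Fin q → ℝ)
    (σ : ℝ) (hσ : 0 < σ)
    (z : ℕ → Fin n → ℝ) (lam : ℕ → Fin m → ℝ) (v : ℕ → Fin q → ℝ)
    (heq1 : ∀ k : ℕ, H.mulVec (z (k + 1)) + f + Gᵀ.mulVec (lam (k + 1)) +
      Aᵀ.mulVec (v (k + 1)) + σ • (z (k + 1) - z k) = 0)
    (heq2 : ∀ k : ℕ, h - G.mulVec (z (k + 1)) + σ • (lam (k + 1) - lam k) = 0)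
    (heq3 : ∀ k : ℕ, (b - A.mulVec (z (k + 1)) + σ • (v (k + 1) - v k)) ⬝ᵥ v (k + 1) = 0)
    (heq4 : ∀ k : ℕ, 0 ≤ v (k + 1))
    (heq5 : ∀ k : ℕ, 0 ≤ b - A.mulVec (z (k + 1)) + σ • (v (k + 1) - v k))
    (δz : Fin n → ℝ) (δlam : Fin m → ℝ) (δv : Fin q → ℝ)
    (hd1 : Tendsto (fun k => z (k + 1) - z k) atTop (𝓝 δz))
    (hd2 : Tendsto (fun k => lam (k + 1) - lam k) atTop (𝓝 δlam))
    (hd3 : Tendsto (fun k => v (k + 1) - v k) atTop (𝓝 δv))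
    (ha1 : Tendsto (fun k : ℕ => (1 / (k : ℝ)) • z k) atTop (𝓝 δz))
    (ha2 : Tendsto (fun k : ℕ => (1 / (k : ℝ)) • lam k) atTop (𝓝 δlam))
    (ha3 : Tendsto (fun k : ℕ => (1 / (k : ℝ)) • v k) atTop (𝓝 δv)) :
    H.mulVec δz = 0 := by
  -- shifted averaged sequences
  have hshift : Tendsto (fun k : ℕ => k + 1) atTop atTop := tendsto_add_atTop_nat 1
  have ha1' : Tendsto (fun k : ℕ => (1 / ((k : ℝ) + 1)) • z (k + 1)) atTop (𝓝 δz) := by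
    have := ha1.comp hshift
    simpa [Function.comp_def] using this
  have ha2' : Tendsto (fun k : ℕ => (1 / ((k : ℝ) + 1)) • lam (k + 1)) atTop (𝓝 δlam) := by
    have := ha2.comp hshift
    simpa [Function.comp_def] using this
  have ha3' : Tendsto (fun k : ℕ => (1 / ((k : ℝ) + 1)) • v (k + 1)) atTop (𝓝 δv) := by
    have := ha3.comp hshift
    simpa [Function.comp_def] using this
  have hinv : Tendsto (fun k : ℕ => 1 / ((k : ℝ) + 1)) atTop (𝓝 0) :=
    tendsto_one_div_add_atTop_nhds_zero_nat
  -- continuity of matrix-vector multiplication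
  have cmul : ∀ (p r : ℕ) (M : Matrix (Fin p) (Fin r) ℝ),
      Continuous (fun x : Fin r → ℝ => M.mulVec x) := fun p r M =>
    (M.mulVecLin).continuous_of_finiteDimensional
  have tH : Tendsto (fun k : ℕ => (1 / ((k : ℝ) + 1)) • H.mulVec (z (k + 1))) atTop
      (𝓝 (H.mulVec δz)) := by
    have := ((cmul n n H).tendsto δz).comp ha1'
    simpa [Function.comp_def, Matrix.mulVec_smul] using this
  have tG : Tendsto (fun k : ℕ => (1 / ((k : ℝ) + 1)) • G.mulVec (z (k + 1))) atTop
      (𝓝 (G.mulVec δz)) := by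
    have := ((cmul m n G).tendsto δz).comp ha1'
    simpa [Function.comp_def, Matrix.mulVec_smul] using this
  have tA : Tendsto (fun k : ℕ => (1 / ((k : ℝ) + 1)) • A.mulVec (z (k + 1))) atTop
      (𝓝 (A.mulVec δz)) := by
    have := ((cmul q n A).tendsto δz).comp ha1'
    simpa [Function.comp_def, Matrix.mulVec_smul] using this
  have tGT : Tendsto (fun k : ℕ => (1 / ((k : ℝ) + 1)) • Gᵀ.mulVec (lam (k + 1))) atTop
      (𝓝 (Gᵀ.mulVec δlam)) := by
    have := ((cmul n m Gᵀ).tendsto δlam).comp ha2'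
    simpa [Function.comp_def, Matrix.mulVec_smul] using this
  have tAT : Tendsto (fun k : ℕ => (1 / ((k : ℝ) + 1)) • Aᵀ.mulVec (v (k + 1))) atTop
      (𝓝 (Aᵀ.mulVec δv)) := by
    have := ((cmul n q Aᵀ).tendsto δv).comp ha3'
    simpa [Function.comp_def, Matrix.mulVec_smul] using this
  -- limit of heq1 / (k+1): H δz + Gᵀ δlam + Aᵀ δv = 0
  have hE1 : H.mulVec δz + Gᵀ.mulVec δlam + Aᵀ.mulVec δv = 0 := by
    have t2 : Tendsto (fun k : ℕ => (1 / ((k : ℝ) + 1)) • f) atTop (𝓝 (0 : Fin n → ℝ)) := by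
      simpa using hinv.smul_const f
    have t5 : Tendsto (fun k : ℕ => (1 / ((k : ℝ) + 1)) • (σ • (z (k + 1) - z k))) atTop
        (𝓝 (0 : Fin n → ℝ)) := by
      simpa using hinv.smul (hd1.const_smul σ)
    have key : Tendsto (fun k : ℕ => (1 / ((k : ℝ) + 1)) •
        (H.mulVec (z (k + 1)) + f + Gᵀ.mulVec (lam (k + 1)) + Aᵀ.mulVec (v (k + 1))
          + σ • (z (k + 1) - z k))) atTop
        (𝓝 (H.mulVec δz + Gᵀ.mulVec δlam + Aᵀ.mulVec δv)) := by
      have := (((tH.add t2).add tGT).add tAT).add t5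
      simpa [smul_add] using this
    have hzero : (fun k : ℕ => (1 / ((k : ℝ) + 1)) •
        (H.mulVec (z (k + 1)) + f + Gᵀ.mulVec (lam (k + 1)) + Aᵀ.mulVec (v (k + 1))
          + σ • (z (k + 1) - z k))) = fun _ : ℕ => (0 : Fin n → ℝ) := by
      funext k; rw [heq1 k]; simp
    rw [hzero] at key
    exact tendsto_nhds_unique key tendsto_const_nhds
  -- limit of heq2 / (k+1): G δz = 0
  have hE2 : G.mulVec δz = 0 := by
    have t2 : Tendsto (fun k : ℕ => (1 / ((k : ℝ) + 1)) • h) atTop (𝓝 (0 : Fin m → ℝ)) := by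
      simpa using hinv.smul_const h
    have t5 : Tendsto (fun k : ℕ => (1 / ((k : ℝ) + 1)) • (σ • (lam (k + 1) - lam k))) atTop
        (𝓝 (0 : Fin m → ℝ)) := by
      simpa using hinv.smul (hd2.const_smul σ)
    have key : Tendsto (fun k : ℕ => (1 / ((k : ℝ) + 1)) •
        (h - G.mulVec (z (k + 1)) + σ • (lam (k + 1) - lam k))) atTop
        (𝓝 (-(G.mulVec δz))) := by
      have := (t2.sub tG).add t5
      simpa [smul_sub, smul_add] using this
    have hzero : (fun k : ℕ => (1 / ((k : ℝ) + 1)) •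
        (h - G.mulVec (z (k + 1)) + σ • (lam (k + 1) - lam k))) = fun _ : ℕ => (0 : Fin m → ℝ) := by
      funext k; rw [heq2 k]; simp
    rw [hzero] at key
    have := tendsto_nhds_unique key tendsto_const_nhds
    simpa [neg_eq_zero] using this
  -- limit of heq3 / (k+1)^2: (A δz) ⬝ᵥ δv = 0
  have hE3 : (A.mulVec δz) ⬝ᵥ δv = 0 := by
    have t2 : Tendsto (fun k : ℕ => (1 / ((k : ℝ) + 1)) • b) atTop (𝓝 (0 : Fin q → ℝ)) := by
      simpa using hinv.smul_const b
    have t5 : Tendsto (fun k : ℕ => (1 / ((k : ℝ) + 1)) • (σ • (v (k + 1) - v k))) atTop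
        (𝓝 (0 : Fin q → ℝ)) := by
      simpa using hinv.smul (hd3.const_smul σ)
    have tleft : Tendsto (fun k : ℕ => (1 / ((k : ℝ) + 1)) •
        (b - A.mulVec (z (k + 1)) + σ • (v (k + 1) - v k))) atTop
        (𝓝 (-(A.mulVec δz))) := by
      have := (t2.sub tA).add t5
      simpa [smul_sub, smul_add] using this
    have key : Tendsto (fun k : ℕ =>
        ((1 / ((k : ℝ) + 1)) • (b - A.mulVec (z (k + 1)) + σ • (v (k + 1) - v k))) ⬝ᵥ
        ((1 / ((k : ℝ) + 1)) • v (k + 1))) atTop (𝓝 ((-(A.mulVec δz)) ⬝ᵥ δv)) := by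
      simp only [dotProduct]
      exact tendsto_finset_sum _ fun i _ =>
        (tendsto_pi_nhds.mp tleft i).mul (tendsto_pi_nhds.mp ha3' i)
    have hzero : (fun k : ℕ =>
        ((1 / ((k : ℝ) + 1)) • (b - A.mulVec (z (k + 1)) + σ • (v (k + 1) - v k))) ⬝ᵥ
        ((1 / ((k : ℝ) + 1)) • v (k + 1))) = fun _ : ℕ => (0 : ℝ) := by
      funext k
      rw [smul_dotProduct, dotProduct_smul, heq3 k]
      simp
    rw [hzero] at key
    have := tendsto_nhds_unique key tendsto_const_nhds
    simpa [neg_dotProduct, neg_eq_zero] using this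
  -- conclude: δz ⬝ᵥ H δz = 0
  have hdot : δz ⬝ᵥ H.mulVec δz = 0 := by
    have h1 : δz ⬝ᵥ (H.mulVec δz + Gᵀ.mulVec δlam + Aᵀ.mulVec δv) = 0 := by
      rw [hE1]; simp
    have h2 : δz ⬝ᵥ Gᵀ.mulVec δlam = (G.mulVec δz) ⬝ᵥ δlam := by
      rw [Matrix.dotProduct_mulVec, Matrix.vecMul_transpose]
    have h3 : δz ⬝ᵥ Aᵀ.mulVec δv = (A.mulVec δz) ⬝ᵥ δv := by
      rw [Matrix.dotProduct_mulVec, Matrix.vecMul_transpose]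
    rw [dotProduct_add, dotProduct_add, h2, h3, hE2, hE3] at h1
    simpa using h1
  have := (hH.dotProduct_mulVec_zero_iff δz).mp (by simpa using hdot)
  exact this
end

section
/- Under the stated proximal-iterate hypotheses, the limit direction satisfies fᵀδz = −σ‖δz‖₂², and in particular fᵀδz ≤ 0. -/
open Matrix Filter Topology

private lemma tendsto_dotP {ι : Type*} {l : Filter ι} {N : ℕ}
    {x y : ι → Fin N → ℝ} {a b : Fin N → ℝ}
    (hx : Tendsto x l (𝓝 a)) (hy : Tendsto y l (𝓝 b)) :
    Tendsto (fun k => x k ⬝ᵥ y k) l (𝓝 (a ⬝ᵥ b)) := by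
  have : Tendsto (fun k => ∑ i, x k i * y k i) l (𝓝 (∑ i, a i * b i)) :=
    tendsto_finset_sum _ fun i _ =>
      (tendsto_pi_nhds.1 hx i).mul (tendsto_pi_nhds.1 hy i)
  simpa [dotProduct] using this

private lemma tendsto_mulVec' {ι : Type*} {l : Filter ι} {p N : ℕ}
    (M : Matrix (Fin p) (Fin N) ℝ) {x : ι → Fin N → ℝ} {a : Fin N → ℝ}
    (hx : Tendsto x l (𝓝 a)) :
    Tendsto (fun k => M.mulVec (x k)) l (𝓝 (M.mulVec a)) := by
  have hc : Continuous fun y : Fin N → ℝ => M.mulVec y := by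
    exact
      (LinearMap.continuous_of_finiteDimensional (Matrix.mulVecLin M))
  exact (hc.tendsto a).comp hx

/-- Under the proximal-iterate hypotheses, `fᵀδz = −σ‖δz‖₂²`, and in
particular `fᵀδz ≤ 0`. -/
theorem prox_limit_direction_objective_descent (n m q : ℕ)
    (H : Matrix (Fin n) (Fin n) ℝ) (hH : H.PosSemidef)
    (f : Fin n → ℝ) (G : Matrix (Fin m) (Fin n) ℝ) (h : Fin m → ℝ)
    (A : Matrix (Fin q) (Fin n) ℝ) (b : Fin q → ℝ)
    (σ : ℝ) (hσ : 0 < σ)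
    (z : ℕ → Fin n → ℝ) (lam : ℕ → Fin m → ℝ) (v : ℕ → Fin q → ℝ)
    (heq1 : ∀ k : ℕ, H.mulVec (z (k + 1)) + f + Gᵀ.mulVec (lam (k + 1)) +
      Aᵀ.mulVec (v (k + 1)) + σ • (z (k + 1) - z k) = 0)
    (heq2 : ∀ k : ℕ, h - G.mulVec (z (k + 1)) + σ • (lam (k + 1) - lam k) = 0)
    (heq3 : ∀ k : ℕ, (b - A.mulVec (z (k + 1)) + σ • (v (k + 1) - v k)) ⬝ᵥ v (k + 1) = 0)
    (heq4 : ∀ k : ℕ, 0 ≤ v (k + 1))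
    (heq5 : ∀ k : ℕ, 0 ≤ b - A.mulVec (z (k + 1)) + σ • (v (k + 1) - v k))
    (δz : Fin n → ℝ) (δlam : Fin m → ℝ) (δv : Fin q → ℝ)
    (hd1 : Tendsto (fun k => z (k + 1) - z k) atTop (𝓝 δz))
    (hd2 : Tendsto (fun k => lam (k + 1) - lam k) atTop (𝓝 δlam))
    (hd3 : Tendsto (fun k => v (k + 1) - v k) atTop (𝓝 δv))
    (ha1 : Tendsto (fun k : ℕ => (1 / (k : ℝ)) • z k) atTop (𝓝 δz))
    (ha2 : Tendsto (fun k : ℕ => (1 / (k : ℝ)) • lam k) atTop (𝓝 δlam))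
    (ha3 : Tendsto (fun k : ℕ => (1 / (k : ℝ)) • v k) atTop (𝓝 δv)) :
    f ⬝ᵥ δz = -σ * (δz ⬝ᵥ δz) ∧ f ⬝ᵥ δz ≤ 0 := by
  set c : ℕ → ℝ := fun k => 1 / ((k : ℝ) + 1) with hcdef
  have hc0 : Tendsto c atTop (𝓝 0) := tendsto_one_div_add_atTop_nhds_zero_nat
  have hcpos : ∀ k : ℕ, 0 < c k := fun k => by positivity
  -- shifted averaged sequences
  have hcast : ∀ k : ℕ, ((k + 1 : ℕ) : ℝ) = (k : ℝ) + 1 := by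
    intro k; push_cast; ring
  have hz' : Tendsto (fun k : ℕ => c k • z (k + 1)) atTop (𝓝 δz) := by
    refine (ha1.comp (tendsto_add_atTop_nat 1)).congr fun k => ?_
    simp [hcdef, Function.comp, hcast k]
  have hlam' : Tendsto (fun k : ℕ => c k • lam (k + 1)) atTop (𝓝 δlam) := by
    refine (ha2.comp (tendsto_add_atTop_nat 1)).congr fun k => ?_
    simp [hcdef, Function.comp, hcast k]
  have hv' : Tendsto (fun k : ℕ => c k • v (k + 1)) atTop (𝓝 δv) := by
    refine (ha3.comp (tendsto_add_atTop_nat 1)).congr fun k => ?_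
    simp [hcdef, Function.comp, hcast k]
  -- Step B : G δz = 0
  have hGz : G.mulVec δz = 0 := by
    have t1 : Tendsto (fun k => c k • h) atTop (𝓝 (0 : Fin m → ℝ)) := by
      simpa using hc0.smul (tendsto_const_nhds (x := h))
    have t2 : Tendsto (fun k => c k • G.mulVec (z (k + 1))) atTop (𝓝 (G.mulVec δz)) := by
      simpa [Matrix.mulVec_smul] using tendsto_mulVec' G hz'
    have t3 : Tendsto (fun k => c k • (σ • (lam (k + 1) - lam k))) atTop
        (𝓝 (0 : Fin m → ℝ)) := by
      simpa using hc0.smul (hd2.const_smul σ)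
    have h1 : Tendsto
        (fun k => c k • (h - G.mulVec (z (k + 1)) + σ • (lam (k + 1) - lam k))) atTop
        (𝓝 (0 - G.mulVec δz + 0)) := by
      simpa [smul_sub, smul_add] using (t1.sub t2).add t3
    have h2 : Tendsto
        (fun k => c k • (h - G.mulVec (z (k + 1)) + σ • (lam (k + 1) - lam k))) atTop
        (𝓝 (0 : Fin m → ℝ)) := by
      simp only [heq2, smul_zero]; exact tendsto_const_nhds
    have := tendsto_nhds_unique h2 h1
    simpa [eq_comm, neg_eq_zero] using this
  -- slack limit for A
  have hsA : Tendsto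
      (fun k => c k • (b - A.mulVec (z (k + 1)) + σ • (v (k + 1) - v k))) atTop
      (𝓝 (0 - A.mulVec δz + 0)) := by
    have t1 : Tendsto (fun k => c k • b) atTop (𝓝 (0 : Fin q → ℝ)) := by
      simpa using hc0.smul (tendsto_const_nhds (x := b))
    have t2 : Tendsto (fun k => c k • A.mulVec (z (k + 1))) atTop (𝓝 (A.mulVec δz)) := by
      simpa [Matrix.mulVec_smul] using tendsto_mulVec' A hz'
    have t3 : Tendsto (fun k => c k • (σ • (v (k + 1) - v k))) atTop
        (𝓝 (0 : Fin q → ℝ)) := by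
      simpa using hc0.smul (hd3.const_smul σ)
    simpa [smul_sub, smul_add] using (t1.sub t2).add t3
  -- Step C : A δz ≤ 0 componentwise
  have hAzle : ∀ i, A.mulVec δz i ≤ 0 := by
    intro i
    have hlim : Tendsto
        (fun k => (c k • (b - A.mulVec (z (k + 1)) + σ • (v (k + 1) - v k))) i) atTop
        (𝓝 ((0 - A.mulVec δz + 0) i)) := tendsto_pi_nhds.1 hsA i
    have hge : ∀ k, (0 : ℝ) ≤ (c k • (b - A.mulVec (z (k + 1)) + σ • (v (k + 1) - v k))) i :=
      fun k => mul_nonneg (hcpos k).le (heq5 k i)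
    have := ge_of_tendsto' hlim hge
    simpa using this
  -- Step E : (A δz) ⬝ᵥ δv = 0
  have hAv : A.mulVec δz ⬝ᵥ δv = 0 := by
    have h1 := tendsto_dotP hsA hv'
    have h2 : Tendsto
        (fun k => (c k • (b - A.mulVec (z (k + 1)) + σ • (v (k + 1) - v k))) ⬝ᵥ
          (c k • v (k + 1))) atTop (𝓝 (0 : ℝ)) := by
      have : ∀ k, (c k • (b - A.mulVec (z (k + 1)) + σ • (v (k + 1) - v k))) ⬝ᵥ
          (c k • v (k + 1)) = 0 := by
        intro k
        rw [smul_dotProduct, dotProduct_smul, heq3]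
        simp
      simp only [this]; exact tendsto_const_nhds
    have := tendsto_nhds_unique h2 h1
    simpa [eq_comm, neg_eq_zero] using this
  -- Step F : H δz + Gᵀ δlam + Aᵀ δv = 0
  have hF : H.mulVec δz + Gᵀ.mulVec δlam + Aᵀ.mulVec δv = 0 := by
    have t1 : Tendsto (fun k => c k • H.mulVec (z (k + 1))) atTop (𝓝 (H.mulVec δz)) := by
      simpa [Matrix.mulVec_smul] using tendsto_mulVec' H hz'
    have t2 : Tendsto (fun k => c k • f) atTop (𝓝 (0 : Fin n → ℝ)) := by
      simpa using hc0.smul (tendsto_const_nhds (x := f))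
    have t3 : Tendsto (fun k => c k • Gᵀ.mulVec (lam (k + 1))) atTop
        (𝓝 (Gᵀ.mulVec δlam)) := by
      simpa [Matrix.mulVec_smul] using tendsto_mulVec' Gᵀ hlam'
    have t4 : Tendsto (fun k => c k • Aᵀ.mulVec (v (k + 1))) atTop
        (𝓝 (Aᵀ.mulVec δv)) := by
      simpa [Matrix.mulVec_smul] using tendsto_mulVec' Aᵀ hv'
    have t5 : Tendsto (fun k => c k • (σ • (z (k + 1) - z k))) atTop
        (𝓝 (0 : Fin n → ℝ)) := by
      simpa using hc0.smul (hd1.const_smul σ)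
    have h1 : Tendsto
        (fun k => c k • (H.mulVec (z (k + 1)) + f + Gᵀ.mulVec (lam (k + 1)) +
          Aᵀ.mulVec (v (k + 1)) + σ • (z (k + 1) - z k))) atTop
        (𝓝 (H.mulVec δz + 0 + Gᵀ.mulVec δlam + Aᵀ.mulVec δv + 0)) := by
      simpa [smul_add] using (((t1.add t2).add t3).add t4).add t5
    have h2 : Tendsto
        (fun k => c k • (H.mulVec (z (k + 1)) + f + Gᵀ.mulVec (lam (k + 1)) +
          Aᵀ.mulVec (v (k + 1)) + σ • (z (k + 1) - z k))) atTop
        (𝓝 (0 : Fin n → ℝ)) := by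
      simp only [heq1, smul_zero]; exact tendsto_const_nhds
    have := tendsto_nhds_unique h2 h1
    simpa [eq_comm] using this
  -- H symmetric (real)
  have hHt : Hᵀ = H := by
    ext i j
    have := congrFun (congrFun hH.1 i) j
    simpa [Matrix.conjTranspose_apply] using this
  -- Step G : H δz = 0
  have hHz0 : H.mulVec δz = 0 := by
    have hdot : δz ⬝ᵥ (H.mulVec δz + Gᵀ.mulVec δlam + Aᵀ.mulVec δv) = 0 := by
      rw [hF, dotProduct_zero]
    have e1 : δz ⬝ᵥ Gᵀ.mulVec δlam = 0 := by
      rw [dotProduct_mulVec, vecMul_transpose, hGz, zero_dotProduct]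
    have e2 : δz ⬝ᵥ Aᵀ.mulVec δv = 0 := by
      rw [dotProduct_mulVec, vecMul_transpose, hAv]
    have e3 : δz ⬝ᵥ H.mulVec δz = 0 := by
      rw [dotProduct_add, dotProduct_add, e1, e2] at hdot
      linarith
    have := (hH.dotProduct_mulVec_zero_iff δz).1 (by simpa using e3)
    exact this
  -- Step H/I : eventually v (k+1) ⬝ᵥ A δz = 0
  have hcomp : ∀ k i, (b - A.mulVec (z (k + 1)) + σ • (v (k + 1) - v k)) i * v (k + 1) i = 0 := by
    intro k i
    have hsum := heq3 k
    rw [dotProduct] at hsum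
    have hnn : ∀ j ∈ Finset.univ, (0 : ℝ) ≤
        (b - A.mulVec (z (k + 1)) + σ • (v (k + 1) - v k)) j * v (k + 1) j :=
      fun j _ => mul_nonneg (heq5 k j) (heq4 k j)
    exact (Finset.sum_eq_zero_iff_of_nonneg hnn).1 hsum i (Finset.mem_univ i)
  have hev : ∀ᶠ k in atTop, v (k + 1) ⬝ᵥ A.mulVec δz = 0 := by
    have hall : ∀ i, ∀ᶠ k in atTop, v (k + 1) i * A.mulVec δz i = 0 := by
      intro i
      rcases lt_or_eq_of_le (hAzle i) with hlt | heqz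
      · -- A δz i < 0 : eventually slack > 0, so v = 0
        have hlim : Tendsto
            (fun k => (c k • (b - A.mulVec (z (k + 1)) + σ • (v (k + 1) - v k))) i) atTop
            (𝓝 ((0 - A.mulVec δz + 0) i)) := tendsto_pi_nhds.1 hsA i
        have hpos : (0 : ℝ) < (0 - A.mulVec δz + 0) i := by
          simpa using neg_pos.2 hlt
        have hevpos := hlim.eventually (eventually_gt_nhds hpos)
        filter_upwards [hevpos] with k hk
        have hspos : 0 < (b - A.mulVec (z (k + 1)) + σ • (v (k + 1) - v k)) i := by
          have : 0 < c k * (b - A.mulVec (z (k + 1)) + σ • (v (k + 1) - v k)) i := hk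
          nlinarith [hcpos k, (heq5 k) i]
        have hv0 : v (k + 1) i = 0 := by
          have := hcomp k i
          rcases mul_eq_zero.1 this with h' | h'
          · exact absurd h' (ne_of_gt hspos)
          · exact h'
        rw [hv0, zero_mul]
      · filter_upwards with k
        rw [heqz, mul_zero]
    have := (Filter.eventually_all).2 hall
    filter_upwards [this] with k hk
    rw [dotProduct]
    exact Finset.sum_eq_zero fun i _ => hk i
  -- Step J : eventual scalar identity and limit
  have key : ∀ᶠ k in atTop, f ⬝ᵥ δz + σ * ((z (k + 1) - z k) ⬝ᵥ δz) = 0 := by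
    filter_upwards [hev] with k hk
    have e := congrArg (fun w => w ⬝ᵥ δz) (heq1 k)
    simp only [add_dotProduct, smul_dotProduct, zero_dotProduct, smul_eq_mul] at e
    have e1 : H.mulVec (z (k + 1)) ⬝ᵥ δz = 0 := by
      rw [dotProduct_comm, dotProduct_mulVec]
      have hv : δz ᵥ* H = H *ᵥ δz := by
        conv_lhs => rw [← hHt]
        rw [vecMul_transpose]
      rw [hv, hHz0, zero_dotProduct]
    have e2 : Gᵀ.mulVec (lam (k + 1)) ⬝ᵥ δz = 0 := by
      rw [dotProduct_comm, dotProduct_mulVec, vecMul_transpose, hGz, zero_dotProduct]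
    have e3 : Aᵀ.mulVec (v (k + 1)) ⬝ᵥ δz = 0 := by
      rw [dotProduct_comm, dotProduct_mulVec, vecMul_transpose, dotProduct_comm]
      exact hk
    rw [e1, e2, e3] at e
    linarith
  have hlim2 : Tendsto (fun k => f ⬝ᵥ δz + σ * ((z (k + 1) - z k) ⬝ᵥ δz)) atTop
      (𝓝 (f ⬝ᵥ δz + σ * (δz ⬝ᵥ δz))) :=
    tendsto_const_nhds.add ((tendsto_dotP hd1 tendsto_const_nhds).const_mul σ)
  have hzero : Tendsto (fun k => f ⬝ᵥ δz + σ * ((z (k + 1) - z k) ⬝ᵥ δz)) atTop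
      (𝓝 (0 : ℝ)) := Tendsto.congr' (EventuallyEq.symm key) tendsto_const_nhds
  have hmain : f ⬝ᵥ δz + σ * (δz ⬝ᵥ δz) = 0 := tendsto_nhds_unique hlim2 hzero
  have hnn : 0 ≤ δz ⬝ᵥ δz := by
    rw [dotProduct]
    exact Finset.sum_nonneg fun i _ => mul_self_nonneg _
  constructor
  · linarith
  · nlinarith
end

section
/- Under the stated proximal-iterate hypotheses, the limit direction satisfies hᵀδλ + bᵀδv = −σ(‖δλ‖₂² + ‖δv‖₂²), and in particular hᵀδλ + bᵀδv ≤ 0. -/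
open Matrix Filter Topology

private lemma dot_tendsto {p : ℕ} (w : Fin p → ℝ) {u : ℕ → Fin p → ℝ} {L : Fin p → ℝ}
    (hu : Tendsto u atTop (𝓝 L)) :
    Tendsto (fun k => w ⬝ᵥ u k) atTop (𝓝 (w ⬝ᵥ L)) := by
  simp only [dotProduct]
  exact tendsto_finset_sum _ fun i _ => (tendsto_pi_nhds.mp hu i).const_mul (w i)

private lemma mulVec_tendsto {p r : ℕ} (M : Matrix (Fin r) (Fin p) ℝ)
    {u : ℕ → Fin p → ℝ} {L : Fin p → ℝ} (hu : Tendsto u atTop (𝓝 L)) :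
    Tendsto (fun k => M.mulVec (u k)) atTop (𝓝 (M.mulVec L)) := by
  rw [tendsto_pi_nhds]
  intro i
  simpa [Matrix.mulVec] using dot_tendsto (M i) hu

private lemma avg_shift {p : ℕ} {u : ℕ → Fin p → ℝ} {L : Fin p → ℝ}
    (hu : Tendsto (fun k : ℕ => (1 / (k : ℝ)) • u k) atTop (𝓝 L)) :
    Tendsto (fun k : ℕ => (1 / (k : ℝ)) • u (k + 1)) atTop (𝓝 L) := by
  have h1 : Tendsto (fun k : ℕ => (1 / ((k : ℝ) + 1)) • u (k + 1)) atTop (𝓝 L) := by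
    have h := hu.comp (tendsto_add_atTop_nat 1)
    refine h.congr fun k => ?_
    simp only [Function.comp]
    congr 1
    push_cast
    ring
  have hr : Tendsto (fun k : ℕ => ((k : ℝ) + 1) / (k : ℝ)) atTop (𝓝 1) := by
    have h0 : Tendsto (fun k : ℕ => 1 + 1 / (k : ℝ)) atTop (𝓝 1) := by
      simpa using tendsto_const_nhds.add (tendsto_one_div_atTop_nhds_zero_nat (𝕜 := ℝ))
    refine h0.congr' ?_
    filter_upwards [eventually_ge_atTop 1] with k hk
    have hk0 : (k : ℝ) ≠ 0 := Nat.cast_ne_zero.2 (by omega)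
    field_simp
  have hcomb := hr.smul h1
  rw [one_smul] at hcomb
  refine hcomb.congr' ?_
  filter_upwards [eventually_ge_atTop 1] with k hk
  have hk0 : (k : ℝ) ≠ 0 := Nat.cast_ne_zero.2 (by omega)
  have hk1 : (k : ℝ) + 1 ≠ 0 := by positivity
  rw [smul_smul]
  congr 1
  field_simp
  try ring

/-- Under the proximal-iterate hypotheses,
`hᵀδλ + bᵀδv = −σ(‖δλ‖₂² + ‖δv‖₂²)`, and in particular `hᵀδλ + bᵀδv ≤ 0`. -/
theorem prox_limit_direction_dual_descent (n m q : ℕ)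
    (H : Matrix (Fin n) (Fin n) ℝ) (hH : H.PosSemidef)
    (f : Fin n → ℝ) (G : Matrix (Fin m) (Fin n) ℝ) (h : Fin m → ℝ)
    (A : Matrix (Fin q) (Fin n) ℝ) (b : Fin q → ℝ)
    (σ : ℝ) (hσ : 0 < σ)
    (z : ℕ → Fin n → ℝ) (lam : ℕ → Fin m → ℝ) (v : ℕ → Fin q → ℝ)
    (heq1 : ∀ k : ℕ, H.mulVec (z (k + 1)) + f + Gᵀ.mulVec (lam (k + 1)) +
      Aᵀ.mulVec (v (k + 1)) + σ • (z (k + 1) - z k) = 0)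
    (heq2 : ∀ k : ℕ, h - G.mulVec (z (k + 1)) + σ • (lam (k + 1) - lam k) = 0)
    (heq3 : ∀ k : ℕ, (b - A.mulVec (z (k + 1)) + σ • (v (k + 1) - v k)) ⬝ᵥ v (k + 1) = 0)
    (heq4 : ∀ k : ℕ, 0 ≤ v (k + 1))
    (heq5 : ∀ k : ℕ, 0 ≤ b - A.mulVec (z (k + 1)) + σ • (v (k + 1) - v k))
    (δz : Fin n → ℝ) (δlam : Fin m → ℝ) (δv : Fin q → ℝ)
    (hd1 : Tendsto (fun k => z (k + 1) - z k) atTop (𝓝 δz))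
    (hd2 : Tendsto (fun k => lam (k + 1) - lam k) atTop (𝓝 δlam))
    (hd3 : Tendsto (fun k => v (k + 1) - v k) atTop (𝓝 δv))
    (ha1 : Tendsto (fun k : ℕ => (1 / (k : ℝ)) • z k) atTop (𝓝 δz))
    (ha2 : Tendsto (fun k : ℕ => (1 / (k : ℝ)) • lam k) atTop (𝓝 δlam))
    (ha3 : Tendsto (fun k : ℕ => (1 / (k : ℝ)) • v k) atTop (𝓝 δv)) :
    h ⬝ᵥ δlam + b ⬝ᵥ δv = -σ * (δlam ⬝ᵥ δlam + δv ⬝ᵥ δv) ∧ h ⬝ᵥ δlam + b ⬝ᵥ δv ≤ 0 := by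
  set s : ℕ → Fin q → ℝ := fun k => b - A.mulVec (z (k + 1)) + σ • (v (k + 1) - v k) with hs
  -- δv is nonnegative
  have hδv : ∀ i, 0 ≤ δv i := by
    intro i
    have hvi := tendsto_pi_nhds.mp ha3 i
    refine ge_of_tendsto hvi ?_
    filter_upwards [eventually_ge_atTop 1] with k hk
    obtain ⟨k', rfl⟩ : ∃ k', k = k' + 1 := ⟨k - 1, (Nat.succ_pred_eq_of_pos hk).symm⟩
    have h4 := heq4 k' i
    have : (0:ℝ) ≤ 1 / ((k' + 1 : ℕ) : ℝ) := by positivity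
    simpa [Pi.smul_apply, smul_eq_mul] using mul_nonneg this h4
  -- eventual complementarity with δv
  have hcomp : ∀ i, ∀ᶠ k in atTop, δv i * s k i = 0 := by
    intro i
    rcases eq_or_lt_of_le (hδv i) with heq0 | hpos
    · filter_upwards with k; rw [← heq0]; ring
    · have hvi := tendsto_pi_nhds.mp ha3 i
      have hev : ∀ᶠ k : ℕ in atTop, 0 < ((1 / (k : ℝ)) • v k) i := by
        exact hvi.eventually (eventually_gt_nhds hpos)
      obtain ⟨N, hN⟩ := eventually_atTop.mp (hev.and (eventually_ge_atTop 1))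
      refine eventually_atTop.2 ⟨N, fun k hk => ?_⟩
      have hvk : 0 < v (k + 1) i := by
        have h1 := (hN (k + 1) (le_trans hk (Nat.le_succ k))).1
        simp only [Pi.smul_apply, smul_eq_mul] at h1
        by_contra hle
        push_neg at hle
        have ha : (0:ℝ) ≤ 1 / ((k + 1 : ℕ) : ℝ) := by positivity
        have := mul_nonpos_of_nonneg_of_nonpos ha hle
        linarith
      -- from complementarity, s k i = 0
      have hsum := heq3 k
      have hterm : s k i * v (k + 1) i = 0 := by
        have hnn : ∀ j ∈ Finset.univ, 0 ≤ s k j * v (k + 1) j := fun j _ =>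
          mul_nonneg (heq5 k j) (heq4 k j)
        have := (Finset.sum_eq_zero_iff_of_nonneg hnn).mp (by simpa [dotProduct, hs] using hsum)
        exact this i (Finset.mem_univ i)
      have : s k i = 0 := by
        rcases mul_eq_zero.mp hterm with h0 | h0
        · exact h0
        · exact absurd h0 (ne_of_gt hvk)
      rw [this, mul_zero]
  have hsev : ∀ᶠ k in atTop, δv ⬝ᵥ s k = 0 := by
    filter_upwards [eventually_all.2 hcomp] with k hk
    exact Finset.sum_eq_zero fun i _ => hk i
  -- rearranged equations
  have hGz : ∀ k, G.mulVec (z (k + 1)) = h + σ • (lam (k + 1) - lam k) := by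
    intro k; funext i
    have := congrFun (heq2 k) i
    simp [Pi.add_apply, Pi.sub_apply, Pi.smul_apply, smul_eq_mul] at this ⊢
    linarith
  have hAz : ∀ k, A.mulVec (z (k + 1)) = b + σ • (v (k + 1) - v k) - s k := by
    intro k; funext i
    simp [hs, Pi.add_apply, Pi.sub_apply, Pi.smul_apply, smul_eq_mul]
  -- limit of (Gᵀδλ)⬝z(k+1)
  have hc1 : Tendsto (fun k => Gᵀ.mulVec δlam ⬝ᵥ z (k + 1)) atTop
      (𝓝 (δlam ⬝ᵥ h + σ * (δlam ⬝ᵥ δlam))) := by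
    have heqfun : ∀ k, Gᵀ.mulVec δlam ⬝ᵥ z (k + 1)
        = δlam ⬝ᵥ h + σ * (δlam ⬝ᵥ (lam (k + 1) - lam k)) := by
      intro k
      rw [mulVec_transpose, ← dotProduct_mulVec, hGz k]
      simp [dotProduct_add, dotProduct_smul, smul_eq_mul]
    have : Tendsto (fun k => δlam ⬝ᵥ h + σ * (δlam ⬝ᵥ (lam (k + 1) - lam k))) atTop
        (𝓝 (δlam ⬝ᵥ h + σ * (δlam ⬝ᵥ δlam))) :=
      tendsto_const_nhds.add ((dot_tendsto δlam hd2).const_mul σ)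
    exact this.congr fun k => (heqfun k).symm
  -- limit of (Aᵀδv)⬝z(k+1)
  have hc2 : Tendsto (fun k => Aᵀ.mulVec δv ⬝ᵥ z (k + 1)) atTop
      (𝓝 (δv ⬝ᵥ b + σ * (δv ⬝ᵥ δv))) := by
    have heqfun : ∀ k, Aᵀ.mulVec δv ⬝ᵥ z (k + 1)
        = δv ⬝ᵥ b + σ * (δv ⬝ᵥ (v (k + 1) - v k)) - δv ⬝ᵥ s k := by
      intro k
      rw [mulVec_transpose, ← dotProduct_mulVec, hAz k]
      simp [dotProduct_add, dotProduct_sub, dotProduct_smul, smul_eq_mul]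
    have hzero : Tendsto (fun k => δv ⬝ᵥ s k) atTop (𝓝 0) :=
      tendsto_const_nhds.congr' (by filter_upwards [hsev] with k hk; exact hk.symm)
    have : Tendsto (fun k => δv ⬝ᵥ b + σ * (δv ⬝ᵥ (v (k + 1) - v k)) - δv ⬝ᵥ s k) atTop
        (𝓝 (δv ⬝ᵥ b + σ * (δv ⬝ᵥ δv) - 0)) :=
      (tendsto_const_nhds.add ((dot_tendsto δv hd3).const_mul σ)).sub hzero
    rw [sub_zero] at this
    exact this.congr fun k => (heqfun k).symm
  -- combined limit
  set S : ℝ := δlam ⬝ᵥ h + σ * (δlam ⬝ᵥ δlam) + (δv ⬝ᵥ b + σ * (δv ⬝ᵥ δv)) with hS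
  set w : Fin n → ℝ := Gᵀ.mulVec δlam + Aᵀ.mulVec δv with hw
  have hc : Tendsto (fun k => w ⬝ᵥ z (k + 1)) atTop (𝓝 S) := by
    have := hc1.add hc2
    exact this.congr fun k => by simp [hw, add_dotProduct]
  -- shifted averaged limits
  have hz1 : Tendsto (fun k : ℕ => (1 / (k : ℝ)) • z (k + 1)) atTop (𝓝 δz) := avg_shift ha1
  have hlam1 : Tendsto (fun k : ℕ => (1 / (k : ℝ)) • lam (k + 1)) atTop (𝓝 δlam) := avg_shift ha2
  have hv1 : Tendsto (fun k : ℕ => (1 / (k : ℝ)) • v (k + 1)) atTop (𝓝 δv) := avg_shift ha3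
  -- stationarity of the limit direction
  have hsum0 : H.mulVec δz + Gᵀ.mulVec δlam + Aᵀ.mulVec δv = 0 := by
    have hrw : ∀ k : ℕ, H.mulVec (z (k + 1)) + Gᵀ.mulVec (lam (k + 1)) + Aᵀ.mulVec (v (k + 1))
        = -(f + σ • (z (k + 1) - z k)) := by
      intro k; funext i
      have := congrFun (heq1 k) i
      simp [Pi.add_apply, Pi.sub_apply, Pi.neg_apply, Pi.smul_apply, smul_eq_mul] at this ⊢
      linarith
    have hA1 : Tendsto (fun k : ℕ => (1 / (k : ℝ)) •
        (H.mulVec (z (k + 1)) + Gᵀ.mulVec (lam (k + 1)) + Aᵀ.mulVec (v (k + 1)))) atTop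
        (𝓝 (H.mulVec δz + Gᵀ.mulVec δlam + Aᵀ.mulVec δv)) := by
      have := ((mulVec_tendsto H hz1).add (mulVec_tendsto Gᵀ hlam1)).add (mulVec_tendsto Aᵀ hv1)
      exact this.congr fun k => by simp [smul_add, mulVec_smul]
    have hA2 : Tendsto (fun k : ℕ => (1 / (k : ℝ)) •
        (H.mulVec (z (k + 1)) + Gᵀ.mulVec (lam (k + 1)) + Aᵀ.mulVec (v (k + 1)))) atTop
        (𝓝 (0 : Fin n → ℝ)) := by
      have hconv : Tendsto (fun k : ℕ => -(f + σ • (z (k + 1) - z k))) atTop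
          (𝓝 (-(f + σ • δz))) := (tendsto_const_nhds.add (hd1.const_smul σ)).neg
      have := (tendsto_one_div_atTop_nhds_zero_nat (𝕜 := ℝ)).smul hconv
      rw [zero_smul] at this
      exact this.congr fun k => by rw [hrw k]
    exact tendsto_nhds_unique hA1 hA2
  -- w ⬝ δz = 0
  have hwδz : w ⬝ᵥ δz = 0 := by
    have h1 : Tendsto (fun k : ℕ => (1 / (k : ℝ)) * (w ⬝ᵥ z (k + 1))) atTop (𝓝 (w ⬝ᵥ δz)) := by
      have := dot_tendsto w hz1
      refine this.congr fun k => ?_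
      simp only [dotProduct, Pi.smul_apply, smul_eq_mul, Finset.mul_sum]
      exact Finset.sum_congr rfl fun i _ => by ring
    have h2 : Tendsto (fun k : ℕ => (1 / (k : ℝ)) * (w ⬝ᵥ z (k + 1))) atTop (𝓝 (0 * S)) :=
      tendsto_one_div_atTop_nhds_zero_nat.mul hc
    rw [zero_mul] at h2
    exact tendsto_nhds_unique h1 h2
  -- H δz = 0, hence w = 0
  have hHz : H.mulVec δz = 0 := by
    have hwe : w = -(H.mulVec δz) := by
      have := hsum0
      rw [hw]
      funext i
      have := congrFun hsum0 i
      simp [Pi.add_apply, Pi.neg_apply] at this ⊢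
      linarith
    have : δz ⬝ᵥ H.mulVec δz = 0 := by
      have := hwδz
      rw [hwe] at this
      have h' : H.mulVec δz ⬝ᵥ δz = 0 := by
        simpa [neg_dotProduct, neg_eq_zero] using this
      rwa [dotProduct_comm] at h'
    have := (hH.dotProduct_mulVec_zero_iff δz).mp (by simpa using this)
    exact this
  have hw0 : w = 0 := by
    rw [hw]
    funext i
    have := congrFun hsum0 i
    have hHi := congrFun hHz i
    simp [Pi.add_apply, Pi.zero_apply] at this hHi ⊢
    linarith
  -- conclude S = 0
  have hS0 : S = 0 := by
    have hzero : Tendsto (fun k => w ⬝ᵥ z (k + 1)) atTop (𝓝 (0:ℝ)) := by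
      have : ∀ k, w ⬝ᵥ z (k + 1) = 0 := fun k => by rw [hw0]; simp
      simpa [this] using (tendsto_const_nhds : Tendsto (fun _ : ℕ => (0:ℝ)) atTop (𝓝 0))
    exact tendsto_nhds_unique hc hzero
  have hdot1 : δlam ⬝ᵥ h = h ⬝ᵥ δlam := dotProduct_comm _ _
  have hdot2 : δv ⬝ᵥ b = b ⬝ᵥ δv := dotProduct_comm _ _
  have hmain : h ⬝ᵥ δlam + b ⬝ᵥ δv = -σ * (δlam ⬝ᵥ δlam + δv ⬝ᵥ δv) := by
    rw [hS, hdot1, hdot2] at hS0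
    linarith
  refine ⟨hmain, ?_⟩
  have hnn1 : 0 ≤ δlam ⬝ᵥ δlam := Finset.sum_nonneg fun i _ => mul_self_nonneg _
  have hnn2 : 0 ≤ δv ⬝ᵥ δv := Finset.sum_nonneg fun i _ => mul_self_nonneg _
  rw [hmain]
  nlinarith
end

section
/- (Infeasibility detection, dual case) Under the stated proximal-iterate hypotheses, if δz ≠ 0 then the dual QP is infeasible: there is no triple (u, λ, v) ∈ ℝⁿ × ℝᵐ × ℝ^q with Hu + f + Gᵀλ + Aᵀv = 0 and v ≥ 0. Moreover δz is a certificate of dual infeasibility, i.e., H·δz = 0, A·δz ≤ 0, G·δz = 0, and fᵀδz < 0. -/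
open Matrix Filter Topology

private lemma tendsto_mulVec_aux {n m : ℕ} (M : Matrix (Fin m) (Fin n) ℝ)
    {x : ℕ → Fin n → ℝ} {a : Fin n → ℝ} (hx : Tendsto x atTop (𝓝 a)) :
    Tendsto (fun k => M.mulVec (x k)) atTop (𝓝 (M.mulVec a)) := by
  have hc : Continuous fun y : Fin n → ℝ => M.mulVec y := by
    have := (Matrix.mulVecLin M).continuous_of_finiteDimensional
    exact this
  exact (hc.tendsto a).comp hx

private lemma tendsto_dot_aux {n : ℕ} {x y : ℕ → Fin n → ℝ} {a c : Fin n → ℝ}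
    (hx : Tendsto x atTop (𝓝 a)) (hy : Tendsto y atTop (𝓝 c)) :
    Tendsto (fun k => x k ⬝ᵥ y k) atTop (𝓝 (a ⬝ᵥ c)) := by
  simp only [dotProduct]
  exact tendsto_finset_sum _ fun i _ =>
    (((continuous_apply i).tendsto a).comp hx).mul (((continuous_apply i).tendsto c).comp hy)

/-- Infeasibility detection, dual case: if `δz ≠ 0` then the dual QP is
infeasible and `δz` is a certificate of dual infeasibility. -/
theorem prox_dual_infeasibility_detection (n m q : ℕ)
    (H : Matrix (Fin n) (Fin n) ℝ) (hH : H.PosSemidef)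
    (f : Fin n → ℝ) (G : Matrix (Fin m) (Fin n) ℝ) (h : Fin m → ℝ)
    (A : Matrix (Fin q) (Fin n) ℝ) (b : Fin q → ℝ)
    (σ : ℝ) (hσ : 0 < σ)
    (z : ℕ → Fin n → ℝ) (lam : ℕ → Fin m → ℝ) (v : ℕ → Fin q → ℝ)
    (heq1 : ∀ k : ℕ, H.mulVec (z (k + 1)) + f + Gᵀ.mulVec (lam (k + 1)) +
      Aᵀ.mulVec (v (k + 1)) + σ • (z (k + 1) - z k) = 0)
    (heq2 : ∀ k : ℕ, h - G.mulVec (z (k + 1)) + σ • (lam (k + 1) - lam k) = 0)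
    (heq3 : ∀ k : ℕ, (b - A.mulVec (z (k + 1)) + σ • (v (k + 1) - v k)) ⬝ᵥ v (k + 1) = 0)
    (heq4 : ∀ k : ℕ, 0 ≤ v (k + 1))
    (heq5 : ∀ k : ℕ, 0 ≤ b - A.mulVec (z (k + 1)) + σ • (v (k + 1) - v k))
    (δz : Fin n → ℝ) (δlam : Fin m → ℝ) (δv : Fin q → ℝ)
    (hd1 : Tendsto (fun k => z (k + 1) - z k) atTop (𝓝 δz))
    (hd2 : Tendsto (fun k => lam (k + 1) - lam k) atTop (𝓝 δlam))
    (hd3 : Tendsto (fun k => v (k + 1) - v k) atTop (𝓝 δv))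
    (ha1 : Tendsto (fun k : ℕ => (1 / (k : ℝ)) • z k) atTop (𝓝 δz))
    (ha2 : Tendsto (fun k : ℕ => (1 / (k : ℝ)) • lam k) atTop (𝓝 δlam))
    (ha3 : Tendsto (fun k : ℕ => (1 / (k : ℝ)) • v k) atTop (𝓝 δv)) :
    δz ≠ 0 →
      (¬ ∃ (u : Fin n → ℝ) (lam' : Fin m → ℝ) (v' : Fin q → ℝ),
          H.mulVec u + f + Gᵀ.mulVec lam' + Aᵀ.mulVec v' = 0 ∧ 0 ≤ v') ∧
      H.mulVec δz = 0 ∧ A.mulVec δz ≤ 0 ∧ G.mulVec δz = 0 ∧ f ⬝ᵥ δz < 0 := by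
  intro hδz
  have hk0 : Tendsto (fun k : ℕ => 1 / (k : ℝ)) atTop (𝓝 0) :=
    tendsto_one_div_atTop_nhds_zero_nat
  -- shifted averages converge to the same limits
  have hshift : ∀ {p : ℕ} (w : ℕ → Fin p → ℝ) (δw : Fin p → ℝ),
      Tendsto (fun k => w (k + 1) - w k) atTop (𝓝 δw) →
      Tendsto (fun k : ℕ => (1 / (k : ℝ)) • w k) atTop (𝓝 δw) →
      Tendsto (fun k : ℕ => (1 / (k : ℝ)) • w (k + 1)) atTop (𝓝 δw) := by
    intro p w δw hdw haw
    have e : (fun k : ℕ => (1 / (k : ℝ)) • w (k + 1))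
        = fun k : ℕ => (1 / (k : ℝ)) • w k + (1 / (k : ℝ)) • (w (k + 1) - w k) := by
      funext k; rw [← smul_add]; congr 1; abel
    rw [e]
    simpa using haw.add (hk0.smul hdw)
  have hz' := hshift z δz hd1 ha1
  have hl' := hshift lam δlam hd2 ha2
  have hv' := hshift v δv hd3 ha3
  have hsym : Hᵀ = H := by simpa [Matrix.IsSymm] using hH.1
  -- G δz = 0
  have e2 : ∀ k : ℕ, G.mulVec (z (k + 1)) = h + σ • (lam (k + 1) - lam k) := by
    intro k; funext i
    have := congrFun (heq2 k) i
    simp only [Pi.add_apply, Pi.sub_apply, Pi.smul_apply, Pi.zero_apply, smul_eq_mul] at this ⊢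
    linarith
  have hGδz : G.mulVec δz = 0 := by
    have h1 : Tendsto (fun k : ℕ => G.mulVec ((1 / (k : ℝ)) • z (k + 1))) atTop
        (𝓝 (G.mulVec δz)) := tendsto_mulVec_aux G hz'
    have h2 : Tendsto (fun k : ℕ => G.mulVec ((1 / (k : ℝ)) • z (k + 1))) atTop (𝓝 0) := by
      have e : (fun k : ℕ => G.mulVec ((1 / (k : ℝ)) • z (k + 1)))
          = fun k : ℕ => (1 / (k : ℝ)) • h + (1 / (k : ℝ)) • (σ • (lam (k + 1) - lam k)) := by
        funext k; rw [Matrix.mulVec_smul, e2 k, smul_add]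
      rw [e]
      simpa using (hk0.smul (tendsto_const_nhds (x := h))).add (hk0.smul (hd2.const_smul σ))
    exact tendsto_nhds_unique h1 h2
  -- the slack sequence scaled by 1/k tends to -(A δz)
  have hT : Tendsto (fun k : ℕ =>
      (1 / (k : ℝ)) • (b - A.mulVec (z (k + 1)) + σ • (v (k + 1) - v k))) atTop
      (𝓝 (-(A.mulVec δz))) := by
    have e : (fun k : ℕ => (1 / (k : ℝ)) • (b - A.mulVec (z (k + 1)) + σ • (v (k + 1) - v k)))
        = fun k : ℕ => (1 / (k : ℝ)) • b - A.mulVec ((1 / (k : ℝ)) • z (k + 1)) +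
            (1 / (k : ℝ)) • (σ • (v (k + 1) - v k)) := by
      funext k; rw [smul_add, smul_sub, Matrix.mulVec_smul]
    rw [e]
    simpa using ((hk0.smul (tendsto_const_nhds (x := b))).sub
      (tendsto_mulVec_aux A hz')).add (hk0.smul (hd3.const_smul σ))
  -- A δz ≤ 0
  have hAδz : A.mulVec δz ≤ 0 := by
    intro i
    have hti : Tendsto (fun k : ℕ =>
        ((1 / (k : ℝ)) • (b - A.mulVec (z (k + 1)) + σ • (v (k + 1) - v k))) i) atTop
        (𝓝 ((-(A.mulVec δz)) i)) := ((continuous_apply i).tendsto _).comp hT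
    have h0 : (0 : ℝ) ≤ (-(A.mulVec δz)) i := by
      refine ge_of_tendsto' hti fun k => ?_
      have h5 := heq5 k i
      simp only [Pi.zero_apply] at h5
      have hk : (0 : ℝ) ≤ 1 / (k : ℝ) := by positivity
      simpa using mul_nonneg hk h5
    simp only [Pi.neg_apply] at h0
    simpa using neg_nonneg.mp (by linarith)
  -- componentwise complementarity
  have hcompl : ∀ (k : ℕ) (i : Fin q),
      v (k + 1) i * (b - A.mulVec (z (k + 1)) + σ • (v (k + 1) - v k)) i = 0 := by
    intro k i
    have hsum := heq3 k
    rw [dotProduct] at hsum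
    have hnn : ∀ j ∈ Finset.univ, 0 ≤ (b - A.mulVec (z (k + 1)) + σ • (v (k + 1) - v k)) j *
        v (k + 1) j := fun j _ => mul_nonneg (heq5 k j) (heq4 k j)
    have := (Finset.sum_eq_zero_iff_of_nonneg hnn).mp hsum i (Finset.mem_univ i)
    rw [mul_comm]; exact this
  -- for strictly infeasible directions, multipliers vanish eventually
  have hev : ∀ i : Fin q, (A.mulVec δz) i < 0 → ∀ᶠ k in atTop, v (k + 1) i = 0 := by
    intro i hi
    set c : ℝ := (A.mulVec δz) i with hc
    have hgi : Tendsto (fun k : ℕ => (A.mulVec ((1 / (k : ℝ)) • z (k + 1))) i) atTop (𝓝 c) :=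
      ((continuous_apply i).tendsto _).comp (tendsto_mulVec_aux A hz')
    have h1 : Tendsto (fun k : ℕ => (A.mulVec (z (k + 1))) i) atTop atBot := by
      refine tendsto_atBot_mono' atTop ?_
        (Tendsto.atTop_mul_const_of_neg' (by linarith : c / 2 < 0) tendsto_natCast_atTop_atTop)
      filter_upwards [hgi.eventually_le_const (by linarith : c < c / 2),
        eventually_ge_atTop 1] with k hgk hk1
      have hkpos : (0 : ℝ) < (k : ℝ) := by exact_mod_cast Nat.lt_of_lt_of_le Nat.zero_lt_one hk1
      have hrepr : (A.mulVec (z (k + 1))) i =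
          (k : ℝ) * (A.mulVec ((1 / (k : ℝ)) • z (k + 1))) i := by
        rw [Matrix.mulVec_smul, Pi.smul_apply, smul_eq_mul]
        field_simp
      rw [hrepr, mul_comm ((k : ℝ)) _, mul_comm ((k : ℝ)) _]
      exact mul_le_mul_of_nonneg_right hgk hkpos.le
    have h2 : Tendsto (fun k : ℕ =>
        (b - A.mulVec (z (k + 1)) + σ • (v (k + 1) - v k)) i) atTop atTop := by
      have e : (fun k : ℕ => (b - A.mulVec (z (k + 1)) + σ • (v (k + 1) - v k)) i)
          = fun k : ℕ => (b i + σ * (v (k + 1) i - v k i)) + (-(A.mulVec (z (k + 1))) i) := by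
        funext k
        simp only [Pi.add_apply, Pi.sub_apply, Pi.smul_apply, Pi.neg_apply, smul_eq_mul]
        ring
      rw [e]
      have hconv : Tendsto (fun k : ℕ => b i + σ * (v (k + 1) i - v k i)) atTop
          (𝓝 (b i + σ * δv i)) := by
        refine tendsto_const_nhds.add (Tendsto.const_mul σ ?_)
        have := ((continuous_apply i).tendsto δv).comp hd3
        simpa [Function.comp_def] using this
      exact hconv.add_atTop (tendsto_neg_atTop_iff.mpr h1)
    filter_upwards [h2.eventually_gt_atTop 0] with k hk
    rcases mul_eq_zero.mp (hcompl k i) with h' | h'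
    · exact h'
    · exact absurd h' (ne_of_gt hk)
  -- eventually v (k+1) ⬝ᵥ A δz = 0
  have hevdot : ∀ᶠ k in atTop, v (k + 1) ⬝ᵥ A.mulVec δz = 0 := by
    have hall : ∀ i : Fin q, ∀ᶠ k in atTop, v (k + 1) i * (A.mulVec δz) i = 0 := by
      intro i
      rcases lt_or_eq_of_le (hAδz i) with hi | hi
      · filter_upwards [hev i (by simpa using hi)] with k hk
        rw [hk, zero_mul]
      · filter_upwards with k
        have : (A.mulVec δz) i = 0 := by simpa using hi
        rw [this, mul_zero]
    filter_upwards [eventually_all.mpr hall] with k hk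
    rw [dotProduct]
    exact Finset.sum_eq_zero fun i _ => hk i
  -- δv ⬝ᵥ A δz = 0
  have hδvA : δv ⬝ᵥ A.mulVec δz = 0 := by
    have h1 : Tendsto (fun k : ℕ => ((1 / (k : ℝ)) • v (k + 1)) ⬝ᵥ A.mulVec δz) atTop
        (𝓝 (δv ⬝ᵥ A.mulVec δz)) := tendsto_dot_aux hv' tendsto_const_nhds
    have h2 : Tendsto (fun k : ℕ => ((1 / (k : ℝ)) • v (k + 1)) ⬝ᵥ A.mulVec δz) atTop (𝓝 0) := by
      refine Tendsto.congr' ?_ (tendsto_const_nhds (x := (0 : ℝ)))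
      filter_upwards [hevdot] with k hk
      rw [smul_dotProduct, hk, smul_zero]
    exact tendsto_nhds_unique h1 h2
  -- limit optimality equation
  have hlimeq : H.mulVec δz + Gᵀ.mulVec δlam + Aᵀ.mulVec δv = 0 := by
    have h1 : Tendsto (fun k : ℕ => (1 / (k : ℝ)) • (H.mulVec (z (k + 1)) + f +
        Gᵀ.mulVec (lam (k + 1)) + Aᵀ.mulVec (v (k + 1)) + σ • (z (k + 1) - z k))) atTop
        (𝓝 (H.mulVec δz + Gᵀ.mulVec δlam + Aᵀ.mulVec δv)) := by
      have e : (fun k : ℕ => (1 / (k : ℝ)) • (H.mulVec (z (k + 1)) + f +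
          Gᵀ.mulVec (lam (k + 1)) + Aᵀ.mulVec (v (k + 1)) + σ • (z (k + 1) - z k)))
          = fun k : ℕ => H.mulVec ((1 / (k : ℝ)) • z (k + 1)) + (1 / (k : ℝ)) • f +
            Gᵀ.mulVec ((1 / (k : ℝ)) • lam (k + 1)) + Aᵀ.mulVec ((1 / (k : ℝ)) • v (k + 1)) +
            (1 / (k : ℝ)) • (σ • (z (k + 1) - z k)) := by
        funext k
        rw [smul_add, smul_add, smul_add, smul_add, Matrix.mulVec_smul, Matrix.mulVec_smul,
          Matrix.mulVec_smul]
      rw [e]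
      have := ((((tendsto_mulVec_aux H hz').add (hk0.smul (tendsto_const_nhds (x := f)))).add
        (tendsto_mulVec_aux Gᵀ hl')).add (tendsto_mulVec_aux Aᵀ hv')).add
        (hk0.smul (hd1.const_smul σ))
      simpa using this
    have h2 : Tendsto (fun k : ℕ => (1 / (k : ℝ)) • (H.mulVec (z (k + 1)) + f +
        Gᵀ.mulVec (lam (k + 1)) + Aᵀ.mulVec (v (k + 1)) + σ • (z (k + 1) - z k))) atTop
        (𝓝 0) := by
      refine Tendsto.congr (fun k => ?_) (tendsto_const_nhds (x := (0 : Fin n → ℝ)))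
      rw [heq1 k, smul_zero]
    exact tendsto_nhds_unique h1 h2
  -- H δz = 0
  have hHδz : H.mulVec δz = 0 := by
    have hdot : δz ⬝ᵥ H.mulVec δz = 0 := by
      have h0 := congrArg (fun w => δz ⬝ᵥ w) hlimeq
      simp only [dotProduct_add, dotProduct_zero] at h0
      have t2 : δz ⬝ᵥ Gᵀ.mulVec δlam = 0 := by
        rw [Matrix.dotProduct_mulVec, Matrix.vecMul_transpose, hGδz, zero_dotProduct]
      have t3 : δz ⬝ᵥ Aᵀ.mulVec δv = 0 := by
        rw [Matrix.dotProduct_mulVec, Matrix.vecMul_transpose, dotProduct_comm]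
        exact hδvA
      rw [t2, t3] at h0
      linarith
    exact (hH.dotProduct_mulVec_zero_iff δz).mp (by simpa using hdot)
  -- f ⬝ᵥ δz = -σ (δz ⬝ᵥ δz)
  have hδzH : δz ᵥ* H = 0 := by
    rw [← hsym, Matrix.vecMul_transpose, hHδz]
  have hfδz : f ⬝ᵥ δz = -(σ * (δz ⬝ᵥ δz)) := by
    have heveq : ∀ᶠ k in atTop, f ⬝ᵥ δz + σ * ((z (k + 1) - z k) ⬝ᵥ δz) = 0 := by
      filter_upwards [hevdot] with k hk
      have h0 := congrArg (fun w => w ⬝ᵥ δz) (heq1 k)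
      simp only [add_dotProduct, zero_dotProduct] at h0
      have t1 : H.mulVec (z (k + 1)) ⬝ᵥ δz = 0 := by
        rw [dotProduct_comm, Matrix.dotProduct_mulVec, hδzH, zero_dotProduct]
      have t2 : Gᵀ.mulVec (lam (k + 1)) ⬝ᵥ δz = 0 := by
        rw [dotProduct_comm, Matrix.dotProduct_mulVec, Matrix.vecMul_transpose, hGδz,
          zero_dotProduct]
      have t3 : Aᵀ.mulVec (v (k + 1)) ⬝ᵥ δz = 0 := by
        rw [dotProduct_comm, Matrix.dotProduct_mulVec, Matrix.vecMul_transpose,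
          dotProduct_comm]
        exact hk
      have t4 : (σ • (z (k + 1) - z k)) ⬝ᵥ δz = σ * ((z (k + 1) - z k) ⬝ᵥ δz) :=
        smul_dotProduct σ _ _
      rw [t1, t2, t3, t4] at h0
      linarith
    have hlim : Tendsto (fun k : ℕ => f ⬝ᵥ δz + σ * ((z (k + 1) - z k) ⬝ᵥ δz)) atTop
        (𝓝 (f ⬝ᵥ δz + σ * (δz ⬝ᵥ δz))) :=
      tendsto_const_nhds.add ((tendsto_dot_aux hd1 tendsto_const_nhds).const_mul σ)
    have hzero : Tendsto (fun k : ℕ => f ⬝ᵥ δz + σ * ((z (k + 1) - z k) ⬝ᵥ δz)) atTop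
        (𝓝 0) := by
      refine Tendsto.congr' ?_ (tendsto_const_nhds (x := (0 : ℝ)))
      filter_upwards [heveq] with k hk
      exact hk.symm
    have := tendsto_nhds_unique hlim hzero
    linarith
  have hδzpos : 0 < δz ⬝ᵥ δz := by
    rcases lt_or_eq_of_le (by
      rw [dotProduct]; exact Finset.sum_nonneg fun i _ => mul_self_nonneg _ :
      (0 : ℝ) ≤ δz ⬝ᵥ δz) with hp | hp
    · exact hp
    · exact absurd (dotProduct_self_eq_zero.mp hp.symm) hδz
  have hflt : f ⬝ᵥ δz < 0 := by
    rw [hfδz]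
    have : 0 < σ * (δz ⬝ᵥ δz) := mul_pos hσ hδzpos
    linarith
  refine ⟨?_, hHδz, hAδz, hGδz, hflt⟩
  rintro ⟨u, lam', v', hEq, hv'⟩
  have h0 := congrArg (fun w => w ⬝ᵥ δz) hEq
  simp only [add_dotProduct, zero_dotProduct] at h0
  have t1 : H.mulVec u ⬝ᵥ δz = 0 := by
    rw [dotProduct_comm, Matrix.dotProduct_mulVec, hδzH, zero_dotProduct]
  have t2 : Gᵀ.mulVec lam' ⬝ᵥ δz = 0 := by
    rw [dotProduct_comm, Matrix.dotProduct_mulVec, Matrix.vecMul_transpose, hGδz,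
      zero_dotProduct]
  have t3 : Aᵀ.mulVec v' ⬝ᵥ δz ≤ 0 := by
    rw [dotProduct_comm, Matrix.dotProduct_mulVec, Matrix.vecMul_transpose,
      dotProduct_comm, dotProduct]
    exact Finset.sum_nonpos fun i _ => mul_nonpos_of_nonneg_of_nonpos (hv' i) (hAδz i)
  rw [t1, t2] at h0
  linarith
end

section
/- (Infeasibility detection, primal case) Under the stated proximal-iterate hypotheses, if (δλ, δv) ≠ (0, 0) then the primal QP is infeasible: there is no z ∈ ℝⁿ with Gz = h and Az ≤ b. Moreover (δλ, δv) is a certificate of primal infeasibility, i.e., δv ≥ 0, Gᵀδλ + Aᵀδv = 0, and hᵀδλ + bᵀδv < 0. -/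
open Matrix Filter Topology

private lemma tendsto_mulVec_lim {a b : ℕ} (M : Matrix (Fin a) (Fin b) ℝ)
    {x : ℕ → Fin b → ℝ} {x0 : Fin b → ℝ} (hx : Tendsto x atTop (𝓝 x0)) :
    Tendsto (fun k => M.mulVec (x k)) atTop (𝓝 (M.mulVec x0)) := by
  rw [tendsto_pi_nhds] at hx ⊢
  intro i
  simp only [Matrix.mulVec, dotProduct]
  exact tendsto_finset_sum _ fun j _ => tendsto_const_nhds.mul (hx j)

private lemma tendsto_dot_lim {a : ℕ} {x y : ℕ → Fin a → ℝ} {x0 y0 : Fin a → ℝ}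
    (hx : Tendsto x atTop (𝓝 x0)) (hy : Tendsto y atTop (𝓝 y0)) :
    Tendsto (fun k => x k ⬝ᵥ y k) atTop (𝓝 (x0 ⬝ᵥ y0)) := by
  rw [tendsto_pi_nhds] at hx hy
  simp only [dotProduct]
  exact tendsto_finset_sum _ fun j _ => (hx j).mul (hy j)

/-- Infeasibility detection, primal case: if `(δλ, δv) ≠ (0,0)` then the primal
QP is infeasible and `(δλ, δv)` is a certificate of primal infeasibility. -/
theorem prox_primal_infeasibility_detection (n m q : ℕ)
    (H : Matrix (Fin n) (Fin n) ℝ) (hH : H.PosSemidef)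
    (f : Fin n → ℝ) (G : Matrix (Fin m) (Fin n) ℝ) (h : Fin m → ℝ)
    (A : Matrix (Fin q) (Fin n) ℝ) (b : Fin q → ℝ)
    (σ : ℝ) (hσ : 0 < σ)
    (z : ℕ → Fin n → ℝ) (lam : ℕ → Fin m → ℝ) (v : ℕ → Fin q → ℝ)
    (heq1 : ∀ k : ℕ, H.mulVec (z (k + 1)) + f + Gᵀ.mulVec (lam (k + 1)) +
      Aᵀ.mulVec (v (k + 1)) + σ • (z (k + 1) - z k) = 0)
    (heq2 : ∀ k : ℕ, h - G.mulVec (z (k + 1)) + σ • (lam (k + 1) - lam k) = 0)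
    (heq3 : ∀ k : ℕ, (b - A.mulVec (z (k + 1)) + σ • (v (k + 1) - v k)) ⬝ᵥ v (k + 1) = 0)
    (heq4 : ∀ k : ℕ, 0 ≤ v (k + 1))
    (heq5 : ∀ k : ℕ, 0 ≤ b - A.mulVec (z (k + 1)) + σ • (v (k + 1) - v k))
    (δz : Fin n → ℝ) (δlam : Fin m → ℝ) (δv : Fin q → ℝ)
    (hd1 : Tendsto (fun k => z (k + 1) - z k) atTop (𝓝 δz))
    (hd2 : Tendsto (fun k => lam (k + 1) - lam k) atTop (𝓝 δlam))
    (hd3 : Tendsto (fun k => v (k + 1) - v k) atTop (𝓝 δv))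
    (ha1 : Tendsto (fun k : ℕ => (1 / (k : ℝ)) • z k) atTop (𝓝 δz))
    (ha2 : Tendsto (fun k : ℕ => (1 / (k : ℝ)) • lam k) atTop (𝓝 δlam))
    (ha3 : Tendsto (fun k : ℕ => (1 / (k : ℝ)) • v k) atTop (𝓝 δv)) :
    (δlam, δv) ≠ (0, 0) →
      (¬ ∃ zf : Fin n → ℝ, G.mulVec zf = h ∧ A.mulVec zf ≤ b) ∧
      0 ≤ δv ∧ Gᵀ.mulVec δlam + Aᵀ.mulVec δv = 0 ∧ h ⬝ᵥ δlam + b ⬝ᵥ δv < 0 := by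
  intro hne
  have h0 : Tendsto (fun k : ℕ => 1 / (k : ℝ)) atTop (𝓝 0) :=
    tendsto_one_div_atTop_nhds_zero_nat
  -- shifted averages converge to the same limits
  have shift : ∀ {a : ℕ} (x : ℕ → Fin a → ℝ) (x0 d : Fin a → ℝ),
      Tendsto (fun k : ℕ => (1 / (k : ℝ)) • x k) atTop (𝓝 x0) →
      Tendsto (fun k => x (k + 1) - x k) atTop (𝓝 d) →
      Tendsto (fun k : ℕ => (1 / (k : ℝ)) • x (k + 1)) atTop (𝓝 x0) := by
    intro a x x0 d hx hd
    have h1 := hx.add (h0.smul hd)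
    rw [zero_smul, add_zero] at h1
    refine h1.congr fun k => ?_
    rw [← smul_add]
    congr 1
    abel
  have hz1 := shift z δz δz ha1 hd1
  have hl1 := shift lam δlam δlam ha2 hd2
  have hv1 := shift v δv δv ha3 hd3
  -- (1/k) • constant → 0
  have hc0 : ∀ {a : ℕ} (c : Fin a → ℝ),
      Tendsto (fun k : ℕ => (1 / (k : ℝ)) • c) atTop (𝓝 0) := by
    intro a c
    simpa using h0.smul (tendsto_const_nhds (x := c))
  -- (1/k) • (σ • Δx) → 0
  have hs0 : ∀ {a : ℕ} (x : ℕ → Fin a → ℝ) (d : Fin a → ℝ),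
      Tendsto (fun k => x (k + 1) - x k) atTop (𝓝 d) →
      Tendsto (fun k : ℕ => (1 / (k : ℝ)) • (σ • (x (k + 1) - x k))) atTop (𝓝 0) := by
    intro a x d hd
    have h2 : Tendsto (fun k : ℕ => σ • ((1 / (k : ℝ)) • (x (k + 1) - x k))) atTop (𝓝 0) := by
      simpa using (h0.smul hd).const_smul σ
    exact h2.congr fun k => smul_comm σ (1 / (k : ℝ)) _
  -- (1/k) • (M *ᵥ x (k+1)) → M *ᵥ δx
  have hm : ∀ {a c : ℕ} (M : Matrix (Fin a) (Fin c) ℝ) (x : ℕ → Fin c → ℝ) (x0 : Fin c → ℝ),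
      Tendsto (fun k : ℕ => (1 / (k : ℝ)) • x (k + 1)) atTop (𝓝 x0) →
      Tendsto (fun k : ℕ => (1 / (k : ℝ)) • M.mulVec (x (k + 1))) atTop (𝓝 (M.mulVec x0)) := by
    intro a c M x x0 hx
    have := tendsto_mulVec_lim M hx
    simpa [Matrix.mulVec_smul] using this
  -- δv ≥ 0
  have hδv : 0 ≤ δv := by
    intro i
    have hvi := (tendsto_pi_nhds.mp ha3) i
    refine ge_of_tendsto hvi ?_
    filter_upwards [eventually_ge_atTop 1] with k hk
    obtain ⟨j, rfl⟩ : ∃ j, k = j + 1 := ⟨k - 1, by omega⟩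
    have : (0:ℝ) ≤ (1 / ((j+1 : ℕ) : ℝ)) * v (j+1) i :=
      mul_nonneg (by positivity) (heq4 j i)
    simpa using this
  -- G δz = 0
  have hGδz : G.mulVec δz = 0 := by
    have t1 : Tendsto (fun k : ℕ => (1 / (k : ℝ)) • h - (1 / (k : ℝ)) • G.mulVec (z (k + 1))
        + (1 / (k : ℝ)) • (σ • (lam (k + 1) - lam k))) atTop
        (𝓝 (0 - G.mulVec δz + 0)) :=
      ((hc0 h).sub (hm G z δz hz1)).add (hs0 lam δlam hd2)
    have t2 : Tendsto (fun _ : ℕ => (0 : Fin m → ℝ)) atTop (𝓝 (0 - G.mulVec δz + 0)) := by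
      refine t1.congr fun k => ?_
      rw [← smul_sub, ← smul_add, heq2 k, smul_zero]
    have := tendsto_nhds_unique t2 tendsto_const_nhds
    simpa [eq_comm, neg_eq_zero, sub_eq_neg_add] using this
  -- H δz + Gᵀ δlam + Aᵀ δv = 0
  have hKKT : H.mulVec δz + Gᵀ.mulVec δlam + Aᵀ.mulVec δv = 0 := by
    have t1 : Tendsto (fun k : ℕ => (1 / (k : ℝ)) • H.mulVec (z (k + 1))
        + (1 / (k : ℝ)) • f + (1 / (k : ℝ)) • Gᵀ.mulVec (lam (k + 1))
        + (1 / (k : ℝ)) • Aᵀ.mulVec (v (k + 1))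
        + (1 / (k : ℝ)) • (σ • (z (k + 1) - z k))) atTop
        (𝓝 (H.mulVec δz + 0 + Gᵀ.mulVec δlam + Aᵀ.mulVec δv + 0)) :=
      ((((hm H z δz hz1).add (hc0 f)).add (hm Gᵀ lam δlam hl1)).add
        (hm Aᵀ v δv hv1)).add (hs0 z δz hd1)
    have t2 : Tendsto (fun _ : ℕ => (0 : Fin n → ℝ)) atTop
        (𝓝 (H.mulVec δz + 0 + Gᵀ.mulVec δlam + Aᵀ.mulVec δv + 0)) := by
      refine t1.congr fun k => ?_
      simp only [← smul_add]
      rw [heq1 k, smul_zero]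
    have := tendsto_nhds_unique t2 tendsto_const_nhds
    simpa [eq_comm] using this
  -- componentwise complementarity
  have hcompw : ∀ (k : ℕ) (i : Fin q),
      (b - A.mulVec (z (k + 1)) + σ • (v (k + 1) - v k)) i * v (k + 1) i = 0 := by
    intro k i
    have hsum : ∑ j, (b - A.mulVec (z (k + 1)) + σ • (v (k + 1) - v k)) j * v (k + 1) j = 0 :=
      heq3 k
    have hnn : ∀ j ∈ Finset.univ,
        0 ≤ (b - A.mulVec (z (k + 1)) + σ • (v (k + 1) - v k)) j * v (k + 1) j :=
      fun j _ => mul_nonneg (heq5 k j) (heq4 k j)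
    exact (Finset.sum_eq_zero_iff_of_nonneg hnn).mp hsum i (Finset.mem_univ i)
  -- eventually w_k ⬝ᵥ δv = 0
  have hwδv : ∀ᶠ k in atTop,
      (b - A.mulVec (z (k + 1)) + σ • (v (k + 1) - v k)) ⬝ᵥ δv = 0 := by
    have hev : ∀ᶠ k in atTop, ∀ i : Fin q,
        (b - A.mulVec (z (k + 1)) + σ • (v (k + 1) - v k)) i * δv i = 0 := by
      rw [eventually_all]
      intro i
      rcases eq_or_lt_of_le (hδv i) with hiz | hip
      · exact Eventually.of_forall fun k => by rw [← hiz]; simp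
      · have hvi := (tendsto_pi_nhds.mp hv1) i
        have hip' : (0 : ℝ) < δv i := by simpa using hip
        have hpos : ∀ᶠ k : ℕ in atTop, 0 < ((1 / (k : ℝ)) • v (k + 1)) i :=
          hvi.eventually_const_lt hip'
        filter_upwards [hpos] with k hk
        have hvk : v (k + 1) i ≠ 0 := by
          intro hh
          rw [Pi.smul_apply, hh, smul_eq_mul, mul_zero] at hk
          exact lt_irrefl 0 hk
        have := hcompw k i
        rcases mul_eq_zero.mp this with h1 | h1
        · rw [h1, zero_mul]
        · exact absurd h1 hvk
    filter_upwards [hev] with k hk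
    exact Finset.sum_eq_zero fun i _ => hk i
  -- (A δz) ⬝ᵥ δv = 0
  have hwlim : Tendsto (fun k : ℕ =>
      (1 / (k : ℝ)) • (b - A.mulVec (z (k + 1)) + σ • (v (k + 1) - v k))) atTop
      (𝓝 (0 - A.mulVec δz + 0)) := by
    have t1 := ((hc0 b).sub (hm A z δz hz1)).add (hs0 v δv hd3)
    refine t1.congr fun k => ?_
    rw [← smul_sub, ← smul_add]
  have hAδzδv : (A.mulVec δz) ⬝ᵥ δv = 0 := by
    have t1 : Tendsto (fun k : ℕ =>
        ((1 / (k : ℝ)) • (b - A.mulVec (z (k + 1)) + σ • (v (k + 1) - v k))) ⬝ᵥ δv) atTop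
        (𝓝 ((0 - A.mulVec δz + 0) ⬝ᵥ δv)) :=
      tendsto_dot_lim hwlim tendsto_const_nhds
    have t2 : Tendsto (fun _ : ℕ => (0 : ℝ)) atTop (𝓝 ((0 - A.mulVec δz + 0) ⬝ᵥ δv)) := by
      refine t1.congr' ?_
      filter_upwards [hwδv] with k hk
      rw [smul_dotProduct, hk, smul_zero]
    have := tendsto_nhds_unique t2 tendsto_const_nhds
    simpa using this.symm
  -- H δz = 0
  have hHδz : H.mulVec δz = 0 := by
    have hdot : δz ⬝ᵥ H.mulVec δz = 0 := by
      have e := congrArg (fun x => x ⬝ᵥ δz) hKKT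
      simp only [add_dotProduct, zero_dotProduct] at e
      have e1 : (Gᵀ.mulVec δlam) ⬝ᵥ δz = δlam ⬝ᵥ G.mulVec δz := by
        rw [Matrix.mulVec_transpose, ← Matrix.dotProduct_mulVec]
      have e2 : (Aᵀ.mulVec δv) ⬝ᵥ δz = δv ⬝ᵥ A.mulVec δz := by
        rw [Matrix.mulVec_transpose, ← Matrix.dotProduct_mulVec]
      rw [e1, e2, hGδz, dotProduct_zero] at e
      rw [dotProduct_comm δv (A.mulVec δz)] at e
      rw [dotProduct_comm δz (H.mulVec δz)]
      linarith [e, hAδzδv]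
    have := (hH.dotProduct_mulVec_zero_iff δz).mp (by simpa using hdot)
    exact this
  -- certificate equation
  have hcert : Gᵀ.mulVec δlam + Aᵀ.mulVec δv = 0 := by
    rw [hHδz, zero_add] at hKKT
    exact hKKT
  -- for all x : (G x) ⬝ᵥ δlam + (A x) ⬝ᵥ δv = 0
  have hGzd : ∀ x : Fin n → ℝ, (G.mulVec x) ⬝ᵥ δlam + (A.mulVec x) ⬝ᵥ δv = 0 := by
    intro x
    have e := congrArg (fun y => x ⬝ᵥ y) hcert
    simp only [dotProduct_add, dotProduct_zero] at e
    rw [Matrix.dotProduct_mulVec, Matrix.dotProduct_mulVec,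
      Matrix.vecMul_transpose, Matrix.vecMul_transpose] at e
    exact e
  -- the key value identity
  have hiden : ∀ᶠ k in atTop, h ⬝ᵥ δlam + b ⬝ᵥ δv =
      -(σ * ((lam (k + 1) - lam k) ⬝ᵥ δlam + (v (k + 1) - v k) ⬝ᵥ δv)) := by
    filter_upwards [hwδv] with k hk
    have e2 : h = G.mulVec (z (k + 1)) - σ • (lam (k + 1) - lam k) := by
      have e := heq2 k
      rw [← sub_eq_zero, ← e]
      abel
    have e3 : b = A.mulVec (z (k + 1)) - σ • (v (k + 1) - v k)
        + (b - A.mulVec (z (k + 1)) + σ • (v (k + 1) - v k)) := by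
      abel
    rw [e2]
    nth_rewrite 1 [e3]
    simp only [sub_dotProduct, add_dotProduct, smul_dotProduct,
      smul_eq_mul]
    have hk' := hk
    simp only [sub_dotProduct, add_dotProduct, smul_dotProduct,
      smul_eq_mul] at hk'
    linear_combination hGzd (z (k + 1)) + hk'
  -- value of the certificate
  have hval : h ⬝ᵥ δlam + b ⬝ᵥ δv = -(σ * (δlam ⬝ᵥ δlam + δv ⬝ᵥ δv)) := by
    have t1 : Tendsto (fun k : ℕ =>
        -(σ * ((lam (k + 1) - lam k) ⬝ᵥ δlam + (v (k + 1) - v k) ⬝ᵥ δv))) atTop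
        (𝓝 (-(σ * (δlam ⬝ᵥ δlam + δv ⬝ᵥ δv)))) :=
      ((tendsto_const_nhds.mul ((tendsto_dot_lim hd2 tendsto_const_nhds).add
        (tendsto_dot_lim hd3 tendsto_const_nhds)))).neg
    have t2 : Tendsto (fun _ : ℕ => h ⬝ᵥ δlam + b ⬝ᵥ δv) atTop
        (𝓝 (-(σ * (δlam ⬝ᵥ δlam + δv ⬝ᵥ δv)))) := t1.congr' (hiden.mono fun k hk => hk.symm)
    exact tendsto_nhds_unique tendsto_const_nhds t2
  -- positivity of the norm term
  have hpos : 0 < δlam ⬝ᵥ δlam + δv ⬝ᵥ δv := by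
    have h1 : 0 ≤ δlam ⬝ᵥ δlam := Finset.sum_nonneg fun i _ => mul_self_nonneg _
    have h2 : 0 ≤ δv ⬝ᵥ δv := Finset.sum_nonneg fun i _ => mul_self_nonneg _
    have : δlam ≠ 0 ∨ δv ≠ 0 := by
      by_contra hc
      push_neg at hc
      exact hne (by rw [hc.1, hc.2])
    rcases this with hl | hv
    · have := lt_of_le_of_ne h1 (Ne.symm (mt dotProduct_self_eq_zero.mp hl))
      linarith
    · have := lt_of_le_of_ne h2 (Ne.symm (mt dotProduct_self_eq_zero.mp hv))
      linarith
  have hneg : h ⬝ᵥ δlam + b ⬝ᵥ δv < 0 := by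
    rw [hval]
    nlinarith
  refine ⟨?_, hδv, hcert, hneg⟩
  rintro ⟨zf, hGzf, hAzf⟩
  have h1 := hGzd zf
  have h2 : 0 ≤ (b - A.mulVec zf) ⬝ᵥ δv :=
    Finset.sum_nonneg fun i _ => mul_nonneg (by simpa using sub_nonneg.mpr (hAzf i)) (hδv i)
  rw [sub_dotProduct] at h2
  rw [hGzf] at h1
  linarith
end
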